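/- arXiv:0906.1415 — 6 statements merged into one kernel-verified Lean document; each statement's English description precedes it below -/
import Mathlib

section
/- Let X be a set, f : X → X a map, x ∈ X a periodic point with f^q(x) = x for some q ≥ 1, v : X → ℝ any function, and c ∈ ℝ with e^{iqc} ≠ 1. Then: (i) the sequence p_c(n) = ∑_{j=0}^{n−1} e^{ijc} v(f^j x) is bounded in n; (ii) for each n ≥ 1 the limit M_c(n) := lim_{N→∞} (1/N) ∑_{j=1}^{N} |p_c(j+n) − p_c(j)|² exists and equals (1/q) ∑_{j=0}^{q−1} |∑_{l=0}^{n−1} e^{ilc} v(f^{j+l} x)|²; and (iii) sup_n M_c(n) < ∞, so that limsup_{n→∞} log M_c(n) / log n ≤ 0. -/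
open Filter Topology

lemma cesaro_periodic (g : ℕ → ℝ) (q : ℕ) (hq : 1 ≤ q)
    (hper : ∀ j, g (j + q) = g j) (hpos : ∀ j, 0 ≤ g j) :
    Tendsto (fun N : ℕ => (1 / (N : ℝ)) * ∑ j ∈ Finset.range N, g j) atTop
      (𝓝 ((1 / (q : ℝ)) * ∑ j ∈ Finset.range q, g j)) := by
  set T : ℝ := ∑ j ∈ Finset.range q, g j with hT
  have hT0 : 0 ≤ T := Finset.sum_nonneg fun j _ => hpos j
  have step : ∀ m, ∑ j ∈ Finset.range (q + m), g j = T + ∑ j ∈ Finset.range m, g j := by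
    intro m
    induction m with
    | zero => simp [hT]
    | succ m ih =>
      have : q + (m + 1) = (q + m) + 1 := by omega
      rw [this, Finset.sum_range_succ, ih, Finset.sum_range_succ]
      have : g (q + m) = g m := by rw [add_comm, hper]
      rw [this]; ring
  have decomp : ∀ k r, ∑ j ∈ Finset.range (k * q + r), g j
      = k * T + ∑ j ∈ Finset.range r, g j := by
    intro k r
    induction k with
    | zero => simp
    | succ k ih =>
      have h1 : (k + 1) * q + r = q + (k * q + r) := by ring
      rw [h1, step, ih]; push_cast; ring
  have key : ∀ N : ℕ, 1 ≤ N →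
      |(1 / (N : ℝ)) * ∑ j ∈ Finset.range N, g j - (1 / (q : ℝ)) * T| ≤ 2 * T / N := by
    intro N hN
    set k := N / q with hk
    set r := N % q with hr
    have hrq : r < q := Nat.mod_lt _ (by omega)
    have hNkr : k * q + r = N := by rw [hk, hr, mul_comm]; exact Nat.div_add_mod N q
    have hsum : ∑ j ∈ Finset.range N, g j = k * T + ∑ j ∈ Finset.range r, g j := by
      rw [← hNkr]; exact decomp k r
    set S : ℝ := ∑ j ∈ Finset.range r, g j with hS
    have hS0 : 0 ≤ S := Finset.sum_nonneg fun j _ => hpos j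
    have hST : S ≤ T := Finset.sum_le_sum_of_subset_of_nonneg
      (Finset.range_subset_range.mpr hrq.le) (fun j _ _ => hpos j)
    have hq0 : (0 : ℝ) < q := by exact_mod_cast hq
    have hN0 : (0 : ℝ) < N := by exact_mod_cast hN
    have hNcast : (N : ℝ) = k * q + r := by exact_mod_cast hNkr.symm
    have heq : (1 / (N : ℝ)) * (k * T + S) - (1 / (q : ℝ)) * T
        = (S - r * T / q) / N := by
      rw [hNcast]
      have hkq : (0:ℝ) < (k:ℝ) * q + r := by rw [← hNcast]; exact hN0
      field_simp
      ring
    rw [hsum, heq, abs_div, abs_of_pos hN0, div_le_div_iff₀ hN0 hN0]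
    have h1 : |S - r * T / q| ≤ 2 * T := by
      have hrT : (r : ℝ) * T / q ≤ T := by
        rw [div_le_iff₀ hq0]
        have : (r : ℝ) ≤ q := by exact_mod_cast hrq.le
        nlinarith
      have hrT0 : 0 ≤ (r : ℝ) * T / q := by positivity
      rw [abs_le]; constructor <;> nlinarith
    nlinarith
  have h0 : Tendsto (fun N : ℕ =>
      (1 / (N : ℝ)) * ∑ j ∈ Finset.range N, g j - (1 / (q : ℝ)) * T) atTop (𝓝 0) := by
    apply squeeze_zero_norm' _ (tendsto_const_div_atTop_nhds_zero_nat (2 * T))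
    filter_upwards [eventually_ge_atTop 1] with N hN
    simpa [Real.norm_eq_abs] using key N hN
  have := h0.add_const ((1 / (q : ℝ)) * T)
  simpa using this

/-- for a periodic point `x` of period `q` and `c` with `e^{iqc} ≠ 1`:
(i) `p_c(n)` is bounded; (ii) for each `n ≥ 1` the time-averaged mean-square displacement
exists and equals `(1/q) ∑_{j=0}^{q-1} |∑_{l=0}^{n-1} e^{ilc} v(f^{j+l}x)|²`;
(iii) `sup_n M_c(n) < ∞`, hence `limsup log M_c(n)/log n ≤ 0`. -/
theorem stmt3 {X : Type*} (f : X → X) (x : X) (q : ℕ) (hq : 1 ≤ q) (hx : f^[q] x = x)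
    (v : X → ℝ) (c : ℝ) (hc : Complex.exp (Complex.I * q * c) ≠ 1)
    (p : ℕ → ℂ)
    (hp : ∀ n, p n = ∑ j ∈ Finset.range n, Complex.exp (Complex.I * j * c) * v (f^[j] x))
    (M : ℕ → ℝ)
    (hM : ∀ n, M n = (1 / (q : ℝ)) * ∑ j ∈ Finset.range q,
      ‖∑ l ∈ Finset.range n,
        Complex.exp (Complex.I * l * c) * v (f^[j + l] x)‖ ^ 2) :
    (∃ B : ℝ, ∀ n, ‖p n‖ ≤ B) ∧
    (∀ n : ℕ, 1 ≤ n → Tendsto (fun N : ℕ => (1 / (N : ℝ)) * ∑ j ∈ Finset.Icc 1 N,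
        ‖p (j + n) - p j‖ ^ 2) atTop (𝓝 (M n))) ∧
    (∃ B : ℝ, ∀ n, M n ≤ B) ∧
    limsup (fun n : ℕ => Real.log (M n) / Real.log n) atTop ≤ 0 := by
  set z : ℂ := Complex.exp (Complex.I * q * c) with hzdef
  have hexp1 : ∀ j : ℕ, ‖Complex.exp (Complex.I * j * c)‖ = 1 := by
    intro j
    have h : Complex.I * (j : ℂ) * (c : ℂ) = ((j * c : ℝ) : ℂ) * Complex.I := by
      push_cast; ring
    rw [h, Complex.norm_exp_ofReal_mul_I]
  have hexpadd : ∀ a b : ℕ, Complex.exp (Complex.I * (↑(a + b) : ℂ) * c)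
      = Complex.exp (Complex.I * a * c) * Complex.exp (Complex.I * b * c) := by
    intro a b
    rw [← Complex.exp_add]
    congr 1
    push_cast; ring
  have hiter : ∀ j : ℕ, f^[j + q] x = f^[j] x := by
    intro j
    rw [Function.iterate_add_apply, hx]
  have ha_per : ∀ j : ℕ, Complex.exp (Complex.I * (↑(j + q) : ℂ) * c) * (v (f^[j + q] x) : ℂ)
      = z * (Complex.exp (Complex.I * j * c) * (v (f^[j] x) : ℂ)) := by
    intro j
    rw [hexpadd, hiter]
    ring
  have prec : ∀ m, p (m + q) = p q + z * p m := by
    intro m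
    induction m with
    | zero => simp [hp 0]
    | succ m ih =>
      have h1 : m + 1 + q = (m + q) + 1 := by omega
      rw [h1, hp ((m + q) + 1), Finset.sum_range_succ, ← hp (m + q), ih,
        hp (m + 1), Finset.sum_range_succ, ← hp m, ha_per]
      ring
  have pform : ∀ k r, p (k * q + r) = z ^ k * p r + (∑ i ∈ Finset.range k, z ^ i) * p q := by
    intro k r
    induction k with
    | zero => simp
    | succ k ih =>
      have h1 : (k + 1) * q + r = (k * q + r) + q := by ring
      rw [h1, prec, ih]
      have h2 : ∑ i ∈ Finset.range (k + 1), z ^ i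
          = (∑ i ∈ Finset.range k, z ^ i) * z + 1 := by
        rw [Finset.sum_range_succ' (fun i => z ^ i) k]
        simp [pow_succ, Finset.sum_mul]
      rw [h2]
      ring
  have habsz : ‖z‖ = 1 := hexp1 q
  -- Part (i)
  set C : ℝ := ∑ j ∈ Finset.range q,
      ‖Complex.exp (Complex.I * j * c) * (v (f^[j] x) : ℂ)‖ with hCdef
  have hC0 : 0 ≤ C := Finset.sum_nonneg fun j _ => norm_nonneg _
  have hpr : ∀ r, r ≤ q → ‖p r‖ ≤ C := by
    intro r hr
    rw [hp r]
    refine (norm_sum_le _ _).trans ?_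
    exact Finset.sum_le_sum_of_subset_of_nonneg (Finset.range_subset_range.mpr hr)
      (fun j _ _ => norm_nonneg _)
  have hzne : ‖z - 1‖ ≠ 0 := by
    simp only [ne_eq, norm_eq_zero, sub_eq_zero]
    exact hc
  have hz1pos : 0 < ‖z - 1‖ := lt_of_le_of_ne (norm_nonneg _) (Ne.symm hzne)
  set D : ℝ := 2 / ‖z - 1‖ with hDdef
  have hD0 : 0 ≤ D := by positivity
  have hgeom : ∀ k : ℕ, ‖∑ i ∈ Finset.range k, z ^ i‖ ≤ D := by
    intro k
    rw [geom_sum_eq hc k, norm_div, hDdef]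
    gcongr
    calc ‖z ^ k - 1‖ ≤ ‖z ^ k‖ + ‖(1:ℂ)‖ :=
          norm_sub_le _ _
      _ = 2 := by rw [norm_pow, habsz, norm_one]; norm_num
  set B : ℝ := C + D * C with hBdef
  have hpB : ∀ n, ‖p n‖ ≤ B := by
    intro n
    have hn : n / q * q + n % q = n := by rw [mul_comm]; exact Nat.div_add_mod n q
    have h := pform (n / q) (n % q)
    rw [hn] at h
    rw [h]
    have h1 : ‖z ^ (n / q) * p (n % q)‖ ≤ C := by
      rw [norm_mul, norm_pow, habsz, one_pow, one_mul]
      exact hpr _ (Nat.mod_lt _ (by omega)).le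
    have h2 : ‖(∑ i ∈ Finset.range (n / q), z ^ i) * p q‖ ≤ D * C := by
      rw [norm_mul]
      exact mul_le_mul (hgeom _) (hpr q le_rfl) (norm_nonneg _) hD0
    calc ‖_‖ ≤ ‖z ^ (n / q) * p (n % q)‖
          + ‖(∑ i ∈ Finset.range (n / q), z ^ i) * p q‖ := norm_add_le _ _
      _ ≤ B := by rw [hBdef]; linarith
  have hB0 : 0 ≤ B := le_trans (norm_nonneg _) (hpB 0)
  -- difference formula
  have diff : ∀ n j, p (j + n) - p j = Complex.exp (Complex.I * j * c) *
      ∑ l ∈ Finset.range n, Complex.exp (Complex.I * l * c) * (v (f^[j + l] x) : ℂ) := by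
    intro n j
    induction n with
    | zero => simp
    | succ n ih =>
      have h1 : j + (n + 1) = (j + n) + 1 := by omega
      rw [h1, hp ((j + n) + 1), Finset.sum_range_succ, ← hp (j + n),
        Finset.sum_range_succ, hexpadd j n]
      linear_combination ih
  have habs2 : ∀ n j, (‖p (j + n) - p j‖) ^ 2
      = (‖∑ l ∈ Finset.range n,
          Complex.exp (Complex.I * l * c) * (v (f^[j + l] x) : ℂ)‖) ^ 2 := by
    intro n j
    rw [diff, norm_mul, hexp1, one_mul]
  have hinner_per : ∀ n j, (∑ l ∈ Finset.range n,
        Complex.exp (Complex.I * l * c) * (v (f^[(j + q) + l] x) : ℂ))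
      = ∑ l ∈ Finset.range n, Complex.exp (Complex.I * l * c) * (v (f^[j + l] x) : ℂ) := by
    intro n j
    refine Finset.sum_congr rfl fun l _ => ?_
    have h : j + q + l = (j + l) + q := by omega
    rw [h, hiter]
  refine ⟨⟨B, hpB⟩, ?_, ⟨4 * B ^ 2, ?_⟩, ?_⟩
  · -- Part (ii)
    intro n hn
    set g : ℕ → ℝ := fun j => (‖∑ l ∈ Finset.range n,
        Complex.exp (Complex.I * l * c) * (v (f^[j + l] x) : ℂ)‖) ^ 2 with hgdef
    have hgper : ∀ j, g (j + q) = g j := by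
      intro j
      simp only [hgdef]
      rw [hinner_per]
    have hgpos : ∀ j, 0 ≤ g j := fun j => sq_nonneg _
    have hshift : ∑ j ∈ Finset.range q, g (1 + j) = ∑ j ∈ Finset.range q, g j := by
      have h1 := Finset.sum_range_succ' g q
      have h2 := Finset.sum_range_succ g q
      have h3 : g q = g 0 := by
        have := hgper 0
        simpa using this
      have h4 : ∑ j ∈ Finset.range q, g (j + 1) = ∑ j ∈ Finset.range q, g j := by
        rw [h3] at h2
        linarith [h1, h2]
      simpa [add_comm] using h4
    have hper' : ∀ j, (fun j => g (1 + j)) (j + q) = (fun j => g (1 + j)) j := by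
      intro j
      simp only []
      have h : 1 + (j + q) = (1 + j) + q := by omega
      rw [h, hgper]
    have tend := cesaro_periodic (fun j => g (1 + j)) q hq hper' (fun j => hgpos _)
    have hlim : (1 / (q : ℝ)) * ∑ j ∈ Finset.range q, g (1 + j) = M n := by
      rw [hshift, hM n]
    rw [hlim] at tend
    have hfun : ∀ N, ∑ j ∈ Finset.Icc 1 N, (‖p (j + n) - p j‖) ^ 2
        = ∑ j ∈ Finset.range N, g (1 + j) := by
      intro N
      rw [← Finset.Ico_add_one_right_eq_Icc, Finset.sum_Ico_eq_sum_range]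
      exact Finset.sum_congr rfl fun j _ => habs2 n (1 + j)
    have heqfun : (fun N : ℕ => (1 / (N : ℝ)) * ∑ j ∈ Finset.Icc 1 N,
        (‖p (j + n) - p j‖) ^ 2)
        = fun N : ℕ => (1 / (N : ℝ)) * ∑ j ∈ Finset.range N, g (1 + j) := by
      funext N
      rw [hfun]
    rw [heqfun]
    exact tend
  · -- Part (iii)
    intro n
    rw [hM n]
    have hq0 : (0 : ℝ) < q := by exact_mod_cast hq
    have hbound : ∀ j ∈ Finset.range q, (‖∑ l ∈ Finset.range n,
        Complex.exp (Complex.I * l * c) * (v (f^[j + l] x) : ℂ)‖) ^ 2 ≤ (2 * B) ^ 2 := by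
      intro j _
      rw [← habs2 n j]
      have h1 : ‖p (j + n) - p j‖ ≤ 2 * B := by
        calc ‖p (j + n) - p j‖
            ≤ ‖p (j + n)‖ + ‖p j‖ := norm_sub_le _ _
          _ ≤ 2 * B := by linarith [hpB (j + n), hpB j]
      exact pow_le_pow_left₀ (norm_nonneg _) h1 2
    have hsum : ∑ j ∈ Finset.range q, (‖∑ l ∈ Finset.range n,
        Complex.exp (Complex.I * l * c) * (v (f^[j + l] x) : ℂ)‖) ^ 2 ≤ q * (2 * B) ^ 2 := by
      calc _ ≤ ∑ _j ∈ Finset.range q, (2 * B) ^ 2 := Finset.sum_le_sum hbound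
        _ = q * (2 * B) ^ 2 := by rw [Finset.sum_const, Finset.card_range]; ring
    have h2 : (1 / (q : ℝ)) * ((q : ℝ) * (2 * B) ^ 2) = 4 * B ^ 2 := by
      field_simp; ring
    have h3 := mul_le_mul_of_nonneg_left hsum
      (le_of_lt (by positivity : (0 : ℝ) < 1 / (q : ℝ)))
    linarith
  · -- Part (iv)
    have hMnonneg : ∀ n, 0 ≤ M n := by
      intro n
      rw [hM n]
      have hq0 : (0 : ℝ) < q := by exact_mod_cast hq
      exact mul_nonneg (by positivity) (Finset.sum_nonneg fun j _ => sq_nonneg _)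
    have hMle : ∀ n, M n ≤ max (4 * B ^ 2) 1 := by
      intro n
      refine le_trans ?_ (le_max_left _ _)
      -- reproduce part (iii) bound
      rw [hM n]
      have hq0 : (0 : ℝ) < q := by exact_mod_cast hq
      have hbound : ∀ j ∈ Finset.range q, (‖∑ l ∈ Finset.range n,
          Complex.exp (Complex.I * l * c) * (v (f^[j + l] x) : ℂ)‖) ^ 2 ≤ (2 * B) ^ 2 := by
        intro j _
        rw [← habs2 n j]
        have h1 : ‖p (j + n) - p j‖ ≤ 2 * B := by
          calc ‖p (j + n) - p j‖
              ≤ ‖p (j + n)‖ + ‖p j‖ := norm_sub_le _ _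
            _ ≤ 2 * B := by linarith [hpB (j + n), hpB j]
        exact pow_le_pow_left₀ (norm_nonneg _) h1 2
      have hsum : ∑ j ∈ Finset.range q, (‖∑ l ∈ Finset.range n,
          Complex.exp (Complex.I * l * c) * (v (f^[j + l] x) : ℂ)‖) ^ 2 ≤ q * (2 * B) ^ 2 := by
        calc _ ≤ ∑ _j ∈ Finset.range q, (2 * B) ^ 2 := Finset.sum_le_sum hbound
          _ = q * (2 * B) ^ 2 := by rw [Finset.sum_const, Finset.card_range]; ring
      have h2 : (1 / (q : ℝ)) * ((q : ℝ) * (2 * B) ^ 2) = 4 * B ^ 2 := by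
        field_simp; ring
      have h3 := mul_le_mul_of_nonneg_left hsum
        (le_of_lt (by positivity : (0 : ℝ) < 1 / (q : ℝ)))
      linarith
    set B' : ℝ := max (4 * B ^ 2) 1 with hB'def
    have hB'1 : 1 ≤ B' := le_max_right _ _
    have hlogB' : 0 ≤ Real.log B' := Real.log_nonneg hB'1
    have hg : Tendsto (fun n : ℕ => Real.log B' / Real.log n) atTop (𝓝 0) :=
      Tendsto.div_atTop tendsto_const_nhds
        (Real.tendsto_log_atTop.comp tendsto_natCast_atTop_atTop)
    have hfg : ∀ᶠ n : ℕ in atTop,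
        Real.log (M n) / Real.log n ≤ Real.log B' / Real.log n := by
      filter_upwards [eventually_ge_atTop 2] with n hn
      have hlog : 0 < Real.log n := Real.log_pos (by exact_mod_cast hn)
      have hMn : Real.log (M n) ≤ Real.log B' := by
        rcases (hMnonneg n).eq_or_lt with h | h
        · rw [← h, Real.log_zero]; exact hlogB'
        · exact Real.log_le_log h (hMle n)
      exact div_le_div_of_nonneg_right hMn hlog.le
    have hev : ∀ ε : ℝ, 0 < ε → ∀ᶠ n : ℕ in atTop,
        Real.log (M n) / Real.log n ≤ ε := by
      intro ε hε
      filter_upwards [hfg, hg.eventually_lt_const hε] with n h1 h2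
      exact h1.trans h2.le
    rw [Filter.limsup_eq]
    by_cases hb : BddBelow {a : ℝ | ∀ᶠ n : ℕ in atTop, Real.log (M n) / Real.log n ≤ a}
    · apply le_of_forall_pos_le_add
      intro ε hε
      rw [zero_add]
      exact csInf_le hb (hev ε hε)
    · rw [Real.sInf_of_not_bddBelow hb]
end

section
/- Let (X, μ) be a probability space, f : X → X measure-preserving, and suppose X is partitioned into disjoint measurable sets X_1, …, X_q with μ(X_j) = 1/q and f(X_j) ⊆ X_{j+1} (indices mod q). Let v ∈ L²(μ) be real-valued, let μ_j denote the probability measure q·μ restricted to X_j, and set A_j = ∫_{X_j} v dμ_j. For s ∈ ℤ and k ≥ 1 (so that kq + s ≥ 0) define ρ_{s,j}(kq) = ∫_{X_j} (v∘f^{kq+s})·v dμ_j − A_{(j+s) mod q}·A_j. Let v_{q,c} = ∑_{ℓ=0}^{q−1} e^{iℓc} (v∘f^ℓ) and ρ_{q,c}(k) = (1/q) ∑_{j=1}^{q} ( ∫_{X_j} (v_{q,c}∘f^{kq})·\overline{v_{q,c}} dμ_j − |∫_{X_j} v_{q,c} dμ_j|² ). Then for every c ∈ ℝ and every k ≥ 1,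 ρ_{q,c}(k) = (1/q) ∑_{j=1}^{q} ∑_{s=−(q−1)}^{q−1} (q − |s|) e^{isc} ρ_{s,j}(kq). -/
open MeasureTheory Filter Topology ENNReal

lemma stmt7_card (q : ℕ) (s : ℤ) :
    ((Finset.range q ×ˢ Finset.range q).filter fun p => (p.1 : ℤ) - p.2 = s).card
      = q - s.natAbs := by
  rw [show q - s.natAbs = (Finset.range (q - s.natAbs)).card from (Finset.card_range _).symm]
  refine Finset.card_nbij' (fun p => min p.1 p.2) (fun m => (m + s.toNat, m + (-s).toNat))
    ?_ ?_ ?_ ?_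
  · intro p hp
    simp only [Finset.coe_filter, Finset.mem_coe, Set.mem_setOf_eq, Finset.mem_filter, Finset.mem_product, Finset.mem_range] at hp ⊢
    omega
  · intro m hm
    simp only [Finset.coe_filter, Finset.mem_coe, Set.mem_setOf_eq, Finset.mem_filter, Finset.mem_product, Finset.mem_range] at hm ⊢
    omega
  · intro p hp
    simp only [Finset.coe_filter, Finset.mem_coe, Set.mem_setOf_eq, Finset.mem_filter, Finset.mem_product, Finset.mem_range] at hp
    obtain ⟨⟨h1, h2⟩, h3⟩ := hp
    ext <;> simp only <;> omega
  · intro m hm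
    simp only [Finset.mem_coe, Finset.mem_range] at hm
    show min (m + s.toNat) (m + (-s).toNat) = m
    omega

lemma stmt7_sum_shift {q : ℕ} (G : ℤ → ℂ) :
    ∑ l ∈ Finset.range q, ∑ m ∈ Finset.range q, G ((l : ℤ) - m) =
    ∑ s ∈ Finset.Icc (-(q : ℤ) + 1) ((q : ℤ) - 1), ((q : ℂ) - ((|s| : ℤ) : ℂ)) * G s := by
  rw [← Finset.sum_product']
  rw [← Finset.sum_fiberwise_of_maps_to (g := fun p : ℕ × ℕ => (p.1 : ℤ) - p.2)
      (t := Finset.Icc (-(q : ℤ) + 1) ((q : ℤ) - 1)) ?_]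
  · refine Finset.sum_congr rfl fun s hs => ?_
    simp only [Finset.mem_Icc] at hs
    have h1 : ∀ p ∈ (Finset.range q ×ˢ Finset.range q).filter
        (fun p : ℕ × ℕ => (p.1 : ℤ) - p.2 = s), G ((p.1 : ℤ) - p.2) = G s := by
      intro p hp
      simp only [Finset.mem_filter] at hp
      rw [hp.2]
    rw [Finset.sum_congr rfl h1, Finset.sum_const, stmt7_card, nsmul_eq_mul]
    congr 1
    have hle : s.natAbs ≤ q := by omega
    have : ((q - s.natAbs : ℕ) : ℂ) = (q : ℂ) - (s.natAbs : ℂ) := by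
      push_cast [hle]; ring
    rw [this]
    congr 1
    rw [Int.abs_eq_natAbs, Int.cast_natCast]
  · intro p hp
    simp only [Finset.mem_product, Finset.mem_range] at hp
    simp only [Finset.mem_Icc]
    omega

open Fin.NatCast Fin.IntCast Fin.CommRing

set_option maxHeartbeats 1000000 in
/-- key identity relating the twisted autocorrelations `ρ_{q,c}` of
`v_{q,c} = ∑_{ℓ<q} e^{iℓc} v∘f^ℓ` to the autocorrelations of `v` up to a `q`-cycle:
for every `c` and `k ≥ 1`,
`ρ_{q,c}(k) = (1/q) ∑_{j=1}^q ∑_{s=-(q-1)}^{q-1} (q-|s|) e^{isc} ρ_{s,j}(kq)`. -/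
theorem stmt7 {X : Type*} [MeasurableSpace X] (μ : Measure X) [IsProbabilityMeasure μ]
    (f : X → X) (hf : MeasurePreserving f μ μ)
    (q : ℕ) [NeZero q]
    (P : Fin q → Set X) (hPmeas : ∀ j, MeasurableSet (P j))
    (hPdisj : ∀ i j, i ≠ j → Disjoint (P i) (P j))
    (hPcover : (⋃ j, P j) = Set.univ)
    (hPμ : ∀ j, μ (P j) = 1 / q)
    (hPmap : ∀ j, Set.MapsTo f (P j) (P (j + 1)))
    (v : X → ℝ) (hv : MemLp v 2 μ)
    (μj : Fin q → Measure X) (hμj : ∀ j, μj j = (q : ℝ≥0∞) • μ.restrict (P j))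
    (A : Fin q → ℝ) (hA : ∀ j, A j = ∫ x, v x ∂(μj j))
    (ρ : ℤ → Fin q → ℕ → ℝ)
    (hρ : ∀ (s : ℤ) (j : Fin q) (k : ℕ), 1 ≤ k →
      ρ s j k = (∫ x, v (f^[((k * q : ℕ) + s).toNat] x) * v x ∂(μj j)) - A (j + (Fin.intCast s : Fin q)) * A j)
    (vq : ℝ → X → ℂ)
    (hvq : ∀ c x, vq c x = ∑ l ∈ Finset.range q, Complex.exp (Complex.I * l * c) * v (f^[l] x))
    (ρq : ℝ → ℕ → ℂ)
    (hρq : ∀ c k, ρq c k = (1 / (q : ℂ)) * ∑ j : Fin q,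
      ((∫ x, vq c (f^[k * q] x) * (starRingEnd ℂ) (vq c x) ∂(μj j)) -
        ((‖∫ x, vq c x ∂(μj j)‖ : ℝ) : ℂ) ^ 2)) :
    ∀ (c : ℝ) (k : ℕ), 1 ≤ k →
      ρq c k = (1 / (q : ℂ)) * ∑ j : Fin q,
        ∑ s ∈ Finset.Icc (-(q : ℤ) + 1) ((q : ℤ) - 1),
          ((q : ℂ) - ((|s| : ℤ) : ℂ)) * Complex.exp (Complex.I * s * c) * (ρ s j k : ℂ) := by
  intro c k hk
  have hq : 0 < q := Nat.pos_of_ne_zero (NeZero.ne q)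
  have hfm : Measurable f := hf.measurable
  -- preimage identity
  have hpre : ∀ j : Fin q, f ⁻¹' (P (j + 1)) = P j := by
    intro j
    apply Set.Subset.antisymm
    · intro x hx
      have hxU : x ∈ ⋃ i, P i := hPcover ▸ Set.mem_univ x
      obtain ⟨i, hi⟩ := Set.mem_iUnion.mp hxU
      by_cases hij : i = j
      · rwa [hij] at hi
      · exfalso
        have h1 : f x ∈ P (i + 1) := hPmap i hi
        have h2 : f x ∈ P (j + 1) := hx
        have hne : i + 1 ≠ j + 1 := fun h => hij (by simpa using h)
        exact Set.disjoint_left.mp (hPdisj _ _ hne) h1 h2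
    · exact hPmap j
  -- one-step measure preservation within the cycle
  have hmpj1 : ∀ j : Fin q, MeasurePreserving f (μj j) (μj (j + 1)) := by
    intro j
    have h0 := hf.restrict_preimage (hPmeas (j + 1))
    rw [hpre j] at h0
    refine ⟨hfm, ?_⟩
    rw [hμj, hμj, Measure.map_smul, h0.map_eq]
  have hmpj : ∀ (m : ℕ) (j : Fin q), MeasurePreserving f^[m] (μj j) (μj (j + (m : Fin q))) := by
    intro m
    induction m with
    | zero => intro j; simpa using MeasurePreserving.id (μj j)
    | succ n ih =>
        intro j
        have hcast : ((n + 1 : ℕ) : Fin q) = (n : Fin q) + 1 := by push_cast; ring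
        rw [Function.iterate_succ', hcast, ← add_assoc]
        exact (hmpj1 (j + (n : Fin q))).comp (ih j)
  -- absolute continuity and domination
  have hacj : ∀ j, μj j ≪ μ := by
    intro j
    rw [hμj]
    exact (Measure.absolutelyContinuous_of_le Measure.restrict_le_self).smul_left _
  have hlej : ∀ j, μj j ≤ (q : ℝ≥0∞) • μ := by
    intro j
    rw [hμj]
    intro s
    simp only [Measure.smul_apply, smul_eq_mul]
    exact mul_le_mul_right (Measure.restrict_le_self s) _
  -- Memℒp of iterates, integrability of products
  have hvL2 : ∀ a : ℕ, MemLp (fun x => v (f^[a] x)) 2 μ :=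
    fun a => hv.comp_measurePreserving (hf.iterate a)
  have hintμ : ∀ a b : ℕ, Integrable (fun x => v (f^[a] x) * v (f^[b] x)) μ := by
    intro a b
    have hpqr : (1 : ℝ≥0∞) / 1 = 1 / 2 + 1 / 2 := by
      rw [ENNReal.add_halves, one_div_one]
    have h := ((hvL2 b).smul (hvL2 a) :
      MemLp ((fun x => v (f^[a] x)) • fun x => v (f^[b] x)) 1 μ)
    rw [memLp_one_iff_integrable] at h
    simpa [Pi.smul_apply', smul_eq_mul, Pi.mul_def] using h
  have hintj : ∀ (a b : ℕ) (j : Fin q),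
      Integrable (fun x => v (f^[a] x) * v (f^[b] x)) (μj j) := by
    intro a b j
    exact ((hintμ a b).smul_measure (ENNReal.natCast_ne_top q)).mono_measure (hlej j)
  have hvintj : ∀ (a : ℕ) (j : Fin q), Integrable (fun x => v (f^[a] x)) (μj j) := by
    intro a j
    exact ((((hvL2 a).integrable (by norm_num)).smul_measure
      (ENNReal.natCast_ne_top q)).mono_measure (hlej j))
  have hcoe_int : ∀ (g : X → ℝ) (ν : Measure X), Integrable g ν →
      Integrable (fun x => ((g x : ℝ) : ℂ)) ν := fun g ν h => h.ofReal
  have hcoe_eq : ∀ (g : X → ℝ) (ν : Measure X),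
      (∫ x, ((g x : ℝ) : ℂ) ∂ν) = ((∫ x, g x ∂ν : ℝ) : ℂ) := fun g ν => integral_ofReal
  -- change of variables
  have hgaesm : ∀ (a : ℕ) (i : Fin q),
      AEStronglyMeasurable (fun y => v (f^[a] y) * v y) (μj i) := by
    intro a i
    have := (hintj a 0 i).aestronglyMeasurable
    simpa using this
  have hIv : ∀ (a m : ℕ) (j : Fin q),
      (∫ x, v (f^[a] (f^[m] x)) * v (f^[m] x) ∂(μj j))
        = ∫ y, v (f^[a] y) * v y ∂(μj (j + (m : Fin q))) := by
    intro a m j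
    have h1 := hmpj m j
    rw [← h1.map_eq, integral_map (hfm.iterate m).aemeasurable
      (h1.map_eq ▸ hgaesm a (j + (m : Fin q)))]
  have hIA : ∀ (m : ℕ) (j : Fin q), (∫ x, v (f^[m] x) ∂(μj j)) = A (j + (m : Fin q)) := by
    intro m j
    rw [hA]
    have h1 := hmpj m j
    rw [← h1.map_eq, integral_map (hfm.iterate m).aemeasurable
      (h1.map_eq ▸ (hv.aestronglyMeasurable.mono_ac (hacj _)))]
  -- key per-term identity
  have hkey : ∀ (l m : ℕ), l < q → m < q → ∀ j : Fin q,
      (∫ x, v (f^[k * q + l] x) * v (f^[m] x) ∂(μj j))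
        = ρ ((l : ℤ) - m) (j + (m : Fin q)) k
          + A (j + (l : Fin q)) * A (j + (m : Fin q)) := by
    intro l m hl hm j
    have hq' : q ≤ k * q := Nat.le_mul_of_pos_left q hk
    have h1 : ∀ x, f^[k * q + l - m] (f^[m] x) = f^[k * q + l] x := by
      intro x
      rw [← Function.iterate_add_apply]
      congr 1
      omega
    have h2 : (∫ x, v (f^[k * q + l] x) * v (f^[m] x) ∂(μj j))
        = ∫ x, v (f^[k * q + l - m] (f^[m] x)) * v (f^[m] x) ∂(μj j) := by
      refine integral_congr_ae (Eventually.of_forall fun x => ?_)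
      simp only [h1]
    rw [h2, hIv (k * q + l - m) m j]
    have h3 := hρ ((l : ℤ) - m) (j + (m : Fin q)) k hk
    have h4 : (((k * q : ℕ) : ℤ) + ((l : ℤ) - m)).toNat = k * q + l - m := by omega
    rw [h4] at h3
    have h5 : (j + (m : Fin q)) + ((((l : ℤ) - (m : ℤ)) : ℤ) : Fin q) = j + (l : Fin q) := by
      have : ((((l : ℤ) - (m : ℤ)) : ℤ) : Fin q) = (l : Fin q) - (m : Fin q) := by
        push_cast
        ring
      rw [this]
      ring
    rw [show (Fin.intCast ((l : ℤ) - m) : Fin q) = ((((l : ℤ) - (m : ℤ)) : ℤ) : Fin q) from rfl] at h3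
    rw [h5] at h3
    linarith [h3]
  -- conjugate exponential
  have hce : ∀ l m : ℕ, (starRingEnd ℂ) (Complex.exp (Complex.I * m * c))
      = Complex.exp (-(Complex.I * m * c)) := by
    intro l m
    rw [← Complex.exp_conj]
    congr 1
    simp [map_mul, Complex.conj_I, Complex.conj_ofReal]
  -- expansion of the correlation integral
  have hexp1 : ∀ j : Fin q, (∫ x, vq c (f^[k * q] x) * (starRingEnd ℂ) (vq c x) ∂(μj j))
      = ∑ l ∈ Finset.range q, ∑ m ∈ Finset.range q,
          Complex.exp (Complex.I * l * c) * (starRingEnd ℂ) (Complex.exp (Complex.I * m * c)) *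
            ((∫ x, v (f^[k * q + l] x) * v (f^[m] x) ∂(μj j) : ℝ) : ℂ) := by
    intro j
    have hptw : ∀ x, vq c (f^[k * q] x) * (starRingEnd ℂ) (vq c x)
        = ∑ l ∈ Finset.range q, ∑ m ∈ Finset.range q,
            Complex.exp (Complex.I * l * c) * (starRingEnd ℂ) (Complex.exp (Complex.I * m * c)) *
              ((v (f^[k * q + l] x) * v (f^[m] x) : ℝ) : ℂ) := by
      intro x
      rw [hvq, hvq, map_sum, Finset.sum_mul_sum]
      refine Finset.sum_congr rfl fun l _ => Finset.sum_congr rfl fun m _ => ?_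
      rw [map_mul, Complex.conj_ofReal]
      have h6 : f^[l] (f^[k * q] x) = f^[k * q + l] x := by
        rw [← Function.iterate_add_apply]
        congr 1
        omega
      rw [h6]
      push_cast
      ring
    rw [integral_congr_ae (Eventually.of_forall hptw)]
    rw [integral_finset_sum _ (fun l _ => integrable_finset_sum _
      (fun m _ => ((hcoe_int _ _ (hintj (k * q + l) m j)).const_mul _)))]
    refine Finset.sum_congr rfl fun l _ => ?_
    rw [integral_finset_sum _ (fun m _ => ((hcoe_int _ _ (hintj (k * q + l) m j)).const_mul _))]
    refine Finset.sum_congr rfl fun m _ => ?_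
    rw [integral_const_mul, hcoe_eq]
  -- expansion of the mean
  have hexp2 : ∀ j : Fin q, (∫ x, vq c x ∂(μj j))
      = ∑ l ∈ Finset.range q, Complex.exp (Complex.I * l * c) * ((A (j + (l : Fin q)) : ℝ) : ℂ) := by
    intro j
    simp only [hvq]
    rw [integral_finset_sum _ (fun l _ => (hcoe_int _ _ (hvintj l j)).const_mul _)]
    refine Finset.sum_congr rfl fun l _ => ?_
    rw [integral_const_mul, hcoe_eq, hIA l j]
  -- expansion of the squared modulus
  have hsq : ∀ j : Fin q, (((‖∫ x, vq c x ∂(μj j)‖ : ℝ)) : ℂ) ^ 2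
      = ∑ l ∈ Finset.range q, ∑ m ∈ Finset.range q,
          Complex.exp (Complex.I * l * c) * (starRingEnd ℂ) (Complex.exp (Complex.I * m * c)) *
            ((A (j + (l : Fin q)) * A (j + (m : Fin q)) : ℝ) : ℂ) := by
    intro j
    have habs : ∀ w : ℂ, ((‖w‖ : ℝ) : ℂ) ^ 2 = w * (starRingEnd ℂ) w := by
      intro w
      rw [Complex.mul_conj, ← Complex.sq_norm]
      push_cast
      ring
    rw [habs, hexp2, map_sum, Finset.sum_mul_sum]
    refine Finset.sum_congr rfl fun l _ => Finset.sum_congr rfl fun m _ => ?_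
    rw [map_mul, Complex.conj_ofReal]
    push_cast
    ring
  -- the per-j identity
  have hTj : ∀ j : Fin q,
      (∫ x, vq c (f^[k * q] x) * (starRingEnd ℂ) (vq c x) ∂(μj j))
        - ((‖∫ x, vq c x ∂(μj j)‖ : ℝ) : ℂ) ^ 2
      = ∑ l ∈ Finset.range q, ∑ m ∈ Finset.range q,
          Complex.exp (Complex.I * (((l : ℤ) - m : ℤ) : ℂ) * c)
            * ((ρ ((l : ℤ) - m) (j + (m : Fin q)) k : ℝ) : ℂ) := by
    intro j
    rw [hexp1 j, hsq j, ← Finset.sum_sub_distrib]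
    refine Finset.sum_congr rfl fun l hl => ?_
    rw [← Finset.sum_sub_distrib]
    refine Finset.sum_congr rfl fun m hm => ?_
    rw [hkey l m (Finset.mem_range.mp hl) (Finset.mem_range.mp hm) j]
    rw [hce l m, ← Complex.exp_add]
    have harg : Complex.I * l * c + -(Complex.I * m * c)
        = Complex.I * (((l : ℤ) - m : ℤ) : ℂ) * c := by
      push_cast
      ring
    rw [harg]
    push_cast
    ring
  -- assemble
  rw [hρq c k]
  congr 1
  have step1 : ∑ j : Fin q, ((∫ x, vq c (f^[k * q] x) * (starRingEnd ℂ) (vq c x) ∂(μj j))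
        - ((‖∫ x, vq c x ∂(μj j)‖ : ℝ) : ℂ) ^ 2)
      = ∑ j : Fin q, ∑ l ∈ Finset.range q, ∑ m ∈ Finset.range q,
          Complex.exp (Complex.I * (((l : ℤ) - m : ℤ) : ℂ) * c)
            * ((ρ ((l : ℤ) - m) (j + (m : Fin q)) k : ℝ) : ℂ) :=
        Finset.sum_congr rfl fun j _ => hTj j
  have step2 : ∑ j : Fin q, ∑ l ∈ Finset.range q, ∑ m ∈ Finset.range q,
          Complex.exp (Complex.I * (((l : ℤ) - m : ℤ) : ℂ) * c)
            * ((ρ ((l : ℤ) - m) (j + (m : Fin q)) k : ℝ) : ℂ)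
      = ∑ l ∈ Finset.range q, ∑ m ∈ Finset.range q, ∑ j : Fin q,
          Complex.exp (Complex.I * (((l : ℤ) - m : ℤ) : ℂ) * c)
            * ((ρ ((l : ℤ) - m) (j + (m : Fin q)) k : ℝ) : ℂ) := by
        rw [Finset.sum_comm]
        exact Finset.sum_congr rfl fun l _ => Finset.sum_comm
  have step3 : ∑ l ∈ Finset.range q, ∑ m ∈ Finset.range q, ∑ j : Fin q,
          Complex.exp (Complex.I * (((l : ℤ) - m : ℤ) : ℂ) * c)
            * ((ρ ((l : ℤ) - m) (j + (m : Fin q)) k : ℝ) : ℂ)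
      = ∑ l ∈ Finset.range q, ∑ m ∈ Finset.range q,
          (fun s : ℤ => Complex.exp (Complex.I * (s : ℂ) * c) * ∑ j : Fin q, ((ρ s j k : ℝ) : ℂ))
            ((l : ℤ) - m) := by
        refine Finset.sum_congr rfl fun l _ => Finset.sum_congr rfl fun m _ => ?_
        simp only [Finset.mul_sum]
        exact Fintype.sum_equiv (Equiv.addRight ((m : ℕ) : Fin q)) _ _ (fun j => rfl)
  have step4 : ∑ l ∈ Finset.range q, ∑ m ∈ Finset.range q,
          (fun s : ℤ => Complex.exp (Complex.I * (s : ℂ) * c) * ∑ j : Fin q, ((ρ s j k : ℝ) : ℂ))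
            ((l : ℤ) - m)
      = ∑ s ∈ Finset.Icc (-(q : ℤ) + 1) ((q : ℤ) - 1),
          ((q : ℂ) - ((|s| : ℤ) : ℂ)) *
            (Complex.exp (Complex.I * (s : ℂ) * c) * ∑ j : Fin q, ((ρ s j k : ℝ) : ℂ)) :=
        stmt7_sum_shift (q := q)
          (fun s => Complex.exp (Complex.I * (s : ℂ) * c) * ∑ j : Fin q, ((ρ s j k : ℝ) : ℂ))
  have step5 : ∑ s ∈ Finset.Icc (-(q : ℤ) + 1) ((q : ℤ) - 1),
          ((q : ℂ) - ((|s| : ℤ) : ℂ)) *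
            (Complex.exp (Complex.I * (s : ℂ) * c) * ∑ j : Fin q, ((ρ s j k : ℝ) : ℂ))
      = ∑ s ∈ Finset.Icc (-(q : ℤ) + 1) ((q : ℤ) - 1), ∑ j : Fin q,
          ((q : ℂ) - ((|s| : ℤ) : ℂ)) * Complex.exp (Complex.I * s * c) * (ρ s j k : ℂ) := by
        refine Finset.sum_congr rfl fun s _ => ?_
        simp only [Finset.mul_sum]
        refine Finset.sum_congr rfl fun j _ => ?_
        ring
  have step6 : ∑ s ∈ Finset.Icc (-(q : ℤ) + 1) ((q : ℤ) - 1), ∑ j : Fin q,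
          ((q : ℂ) - ((|s| : ℤ) : ℂ)) * Complex.exp (Complex.I * s * c) * (ρ s j k : ℂ)
      = ∑ j : Fin q, ∑ s ∈ Finset.Icc (-(q : ℤ) + 1) ((q : ℤ) - 1),
          ((q : ℂ) - ((|s| : ℤ) : ℂ)) * Complex.exp (Complex.I * s * c) * (ρ s j k : ℂ) :=
        Finset.sum_comm
  exact (((((step1.trans step2).trans step3).trans step4).trans step5).trans step6)
end

section
/- Let ρ : ℕ → ℝ satisfy ∑_{k=1}^∞ k|ρ(k)| < ∞. For c ∈ ℝ set S(c) = ∑_{k=−∞}^{∞} e^{ikc} ρ(|k|), S_0(c) = −∑_{k=−∞}^{∞} e^{ikc} |k| ρ(|k|), and D_c(n) = ∑_{k=−n}^{n} (n − |k|) e^{ikc} ρ(|k|). Then for all c and n ≥ 1, |D_c(n) − S(c)·n − S_0(c)| ≤ 2 ∑_{k=n+1}^{∞} (k − n)|ρ(k)|, and this bound tends to 0 as n → ∞; in particular D_c(n) = S(c)·n + O(1) uniformly in c, and S_0 is continuous on [0, 2π]. -/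
open Filter Topology

/-- Modified mean-square displacement `D_c(n) = ∑_{k=-n}^n (n-|k|) e^{ikc} ρ(|k|)`. -/
noncomputable def Dc (ρ : ℕ → ℝ) (c : ℝ) (n : ℕ) : ℂ :=
  ∑ k ∈ Finset.Icc (-(n : ℤ)) (n : ℤ),
    ((n : ℂ) - ((|k| : ℤ) : ℂ)) * Complex.exp (Complex.I * k * c) * (ρ k.natAbs : ℂ)

/-- Power spectrum `S(c) = ∑_{k∈ℤ} e^{ikc} ρ(|k|)`. -/
noncomputable def Sc (ρ : ℕ → ℝ) (c : ℝ) : ℂ :=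
  ∑' k : ℤ, Complex.exp (Complex.I * k * c) * (ρ k.natAbs : ℂ)

/-- `S₀(c) = -∑_{k∈ℤ} e^{ikc} |k| ρ(|k|)`. -/
noncomputable def S0c (ρ : ℕ → ℝ) (c : ℝ) : ℂ :=
  -∑' k : ℤ, Complex.exp (Complex.I * k * c) * ((|k| : ℤ) : ℂ) * (ρ k.natAbs : ℂ)

lemma norm_exp_term (k : ℤ) (c : ℝ) : ‖Complex.exp (Complex.I * k * c)‖ = 1 := by
  have h : Complex.I * k * c = ((k * c : ℝ) : ℂ) * Complex.I := by push_cast; ring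
  rw [h, Complex.norm_exp_ofReal_mul_I]

lemma abs_cast_eq (k : ℤ) : ((|k| : ℤ) : ℂ) = ((k.natAbs : ℕ) : ℂ) := by
  rw [Int.abs_eq_natAbs, Int.cast_natCast]

lemma sumAbs (ρ : ℕ → ℝ) (hsum : Summable fun k : ℕ => (k : ℝ) * |ρ k|) :
    Summable fun k : ℕ => |ρ k| := by
  have h1 : Summable fun k : ℕ => ((k + 1 : ℕ) : ℝ) * |ρ (k + 1)| :=
    (summable_nat_add_iff (f := fun k : ℕ => (k : ℝ) * |ρ k|) 1).mpr hsum
  refine (summable_nat_add_iff 1).mp (h1.of_nonneg_of_le (fun k => abs_nonneg _) fun k => ?_)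
  have h2 : (1 : ℝ) ≤ ((k + 1 : ℕ) : ℝ) := by exact_mod_cast Nat.succ_le_succ (Nat.zero_le k)
  nlinarith [abs_nonneg (ρ (k + 1))]

lemma sumZAbs (ρ : ℕ → ℝ) (hsum : Summable fun k : ℕ => (k : ℝ) * |ρ k|) :
    Summable fun k : ℤ => |ρ k.natAbs| := by
  apply Summable.of_nat_of_neg <;> simpa using sumAbs ρ hsum

lemma sumZk (ρ : ℕ → ℝ) (hsum : Summable fun k : ℕ => (k : ℝ) * |ρ k|) :
    Summable fun k : ℤ => (k.natAbs : ℝ) * |ρ k.natAbs| := by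
  apply Summable.of_nat_of_neg <;> simpa using hsum

lemma norm_f (ρ : ℕ → ℝ) (c : ℝ) (k : ℤ) :
    ‖Complex.exp (Complex.I * k * c) * (ρ k.natAbs : ℂ)‖ = |ρ k.natAbs| := by
  rw [norm_mul, norm_exp_term, one_mul, Complex.norm_real, Real.norm_eq_abs]

lemma norm_g (ρ : ℕ → ℝ) (c : ℝ) (k : ℤ) :
    ‖Complex.exp (Complex.I * k * c) * ((|k| : ℤ) : ℂ) * (ρ k.natAbs : ℂ)‖ =
      (k.natAbs : ℝ) * |ρ k.natAbs| := by
  rw [norm_mul, norm_mul, norm_exp_term, one_mul, abs_cast_eq, Complex.norm_natCast,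
    Complex.norm_real, Real.norm_eq_abs]


/-- if `∑ k|ρ(k)| < ∞` then for all `c` and `n ≥ 1`,
`|D_c(n) - S(c)n - S₀(c)| ≤ 2 ∑_{k>n} (k-n)|ρ(k)|`; this bound tends to `0`;
in particular `D_c(n) = S(c)n + O(1)` uniformly in `c`, and `S₀` is continuous
on `[0, 2π]`. -/
theorem stmt10 (ρ : ℕ → ℝ) (hsum : Summable fun k : ℕ => (k : ℝ) * |ρ k|) :
    (∀ (c : ℝ) (n : ℕ), 1 ≤ n →
      ‖Dc ρ c n - Sc ρ c * n - S0c ρ c‖ ≤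
        2 * ∑' k : ℕ, ((k : ℝ) + 1) * |ρ (n + 1 + k)|) ∧
    Tendsto (fun n : ℕ => 2 * ∑' k : ℕ, ((k : ℝ) + 1) * |ρ (n + 1 + k)|) atTop (𝓝 0) ∧
    (∃ B : ℝ, ∀ (c : ℝ) (n : ℕ), 1 ≤ n →
      ‖Dc ρ c n - Sc ρ c * n‖ ≤ B) ∧
    ContinuousOn (S0c ρ) (Set.Icc 0 (2 * Real.pi)) := by
  have hf : ∀ c : ℝ, Summable fun k : ℤ => Complex.exp (Complex.I * k * c) * (ρ k.natAbs : ℂ) := by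
    intro c
    apply Summable.of_norm
    simpa only [norm_f] using sumZAbs ρ hsum
  have hg : ∀ c : ℝ, Summable fun k : ℤ =>
      Complex.exp (Complex.I * k * c) * ((|k| : ℤ) : ℂ) * (ρ k.natAbs : ℂ) := by
    intro c
    apply Summable.of_norm
    simpa only [norm_g] using sumZk ρ hsum
  -- the tail comparison
  have hTle : ∀ n j : ℕ, ((j : ℝ) + 1) * |ρ (n + 1 + j)| ≤
      ((j + (n + 1) : ℕ) : ℝ) * |ρ (j + (n + 1))| := by
    intro n j
    rw [show n + 1 + j = j + (n + 1) from by omega]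
    have : ((j : ℝ) + 1) ≤ ((j + (n + 1) : ℕ) : ℝ) := by push_cast; linarith
    exact mul_le_mul_of_nonneg_right this (abs_nonneg _)
  have hu : ∀ n : ℕ, Summable fun j : ℕ => ((j + (n + 1) : ℕ) : ℝ) * |ρ (j + (n + 1))| :=
    fun n => (summable_nat_add_iff (f := fun k : ℕ => (k : ℝ) * |ρ k|) (n + 1)).mpr hsum
  have hTsum : ∀ n : ℕ, Summable fun j : ℕ => ((j : ℝ) + 1) * |ρ (n + 1 + j)| := fun n =>
    (hu n).of_nonneg_of_le (fun j => by positivity) (hTle n)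
  -- main bound
  have main : ∀ (c : ℝ) (n : ℕ),
      ‖Dc ρ c n - Sc ρ c * n - S0c ρ c‖ ≤
        2 * ∑' k : ℕ, ((k : ℝ) + 1) * |ρ (n + 1 + k)| := by
    intro c n
    set F : ℤ → ℂ := fun k =>
      ((n : ℂ) - ((|k| : ℤ) : ℂ)) * Complex.exp (Complex.I * k * c) * (ρ k.natAbs : ℂ) with hFdef
    have hFeq : ∀ k : ℤ, F k = (n : ℂ) * (Complex.exp (Complex.I * k * c) * (ρ k.natAbs : ℂ)) -
        Complex.exp (Complex.I * k * c) * ((|k| : ℤ) : ℂ) * (ρ k.natAbs : ℂ) := by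
      intro k; simp only [hFdef]; ring
    have hFsum : Summable F := by
      rw [show F = fun k : ℤ => (n : ℂ) * (Complex.exp (Complex.I * k * c) * (ρ k.natAbs : ℂ)) -
          Complex.exp (Complex.I * k * c) * ((|k| : ℤ) : ℂ) * (ρ k.natAbs : ℂ) from funext hFeq]
      exact ((hf c).mul_left _).sub (hg c)
    have htsumF : ∑' k : ℤ, F k = Sc ρ c * n + S0c ρ c := by
      rw [show F = fun k : ℤ => (n : ℂ) * (Complex.exp (Complex.I * k * c) * (ρ k.natAbs : ℂ)) -
          Complex.exp (Complex.I * k * c) * ((|k| : ℤ) : ℂ) * (ρ k.natAbs : ℂ) from funext hFeq]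
      rw [Summable.tsum_sub ((hf c).mul_left _) (hg c), tsum_mul_left]
      simp only [Sc, S0c]
      ring
    have hDc : Dc ρ c n = ∑ k ∈ Finset.Icc (-(n : ℤ)) (n : ℤ), F k := rfl
    have hkey : Dc ρ c n - Sc ρ c * n - S0c ρ c =
        -∑' k : ↑((Finset.Icc (-(n : ℤ)) (n : ℤ) : Set ℤ))ᶜ, F k := by
      have h := Summable.sum_add_tsum_compl (s := Finset.Icc (-(n : ℤ)) (n : ℤ)) hFsum
      rw [hDc]
      linear_combination h + htsumF
    have hnormF : Summable fun k : ℤ => ‖F k‖ := by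
      refine (((sumZAbs ρ hsum).mul_left (n : ℝ)).add (sumZk ρ hsum)).of_nonneg_of_le
        (fun k => norm_nonneg _) fun k => ?_
      calc ‖F k‖ ≤ ‖(n : ℂ) * (Complex.exp (Complex.I * k * c) * (ρ k.natAbs : ℂ))‖ +
            ‖Complex.exp (Complex.I * k * c) * ((|k| : ℤ) : ℂ) * (ρ k.natAbs : ℂ)‖ := by
            rw [hFeq k]; exact norm_sub_le _ _
        _ = (n : ℝ) * |ρ k.natAbs| + (k.natAbs : ℝ) * |ρ k.natAbs| := by
            rw [norm_mul, norm_f, norm_g, Complex.norm_natCast]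
    set G : ℕ → ℝ := fun m => if n < m then ((m : ℝ) - n) * |ρ m| else 0 with hGdef
    have hGnonneg : ∀ m, 0 ≤ G m := by
      intro m
      simp only [hGdef]
      split_ifs with h
      · have h1 : (n : ℝ) ≤ (m : ℝ) := by exact_mod_cast h.le
        have h2 := abs_nonneg (ρ m)
        nlinarith
      · exact le_rfl
    have hGsum : Summable G := by
      refine hsum.of_nonneg_of_le hGnonneg fun m => ?_
      simp only [hGdef]
      split_ifs with h
      · exact mul_le_mul_of_nonneg_right (by linarith [Nat.cast_nonneg (α := ℝ) n]) (abs_nonneg _)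
      · positivity
    set H : ℤ → ℝ := fun k => G k.natAbs with hHdef
    have hHsum : Summable H := by
      apply Summable.of_nat_of_neg
      · exact hGsum.congr fun m => by simp [hHdef]
      · exact hGsum.congr fun m => by simp [hHdef]
    have hstep1 : ‖∑' k : ↑((Finset.Icc (-(n : ℤ)) (n : ℤ) : Set ℤ))ᶜ, F k‖ ≤ ∑' k : ℤ, H k := by
      refine le_trans (norm_tsum_le_tsum_norm (hnormF.subtype _)) ?_
      rw [tsum_subtype (((Finset.Icc (-(n : ℤ)) (n : ℤ) : Finset ℤ) : Set ℤ))ᶜ (fun k => ‖F k‖)]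
      refine Summable.tsum_le_tsum (fun k => ?_) (hnormF.indicator _) hHsum
      by_cases hk : k ∈ ((Finset.Icc (-(n : ℤ)) (n : ℤ) : Set ℤ))ᶜ
      · rw [Set.indicator_of_mem hk]
        have hk' : n < k.natAbs := by
          simp only [Set.mem_compl_iff, Finset.coe_Icc, Set.mem_Icc, not_and_or, not_le] at hk
          omega
        have hA : ((n : ℂ) - ((|k| : ℤ) : ℂ)) = ((((n : ℝ) - (k.natAbs : ℝ)) : ℝ) : ℂ) := by
          rw [abs_cast_eq]; push_cast; ring
        have : ‖F k‖ = ((k.natAbs : ℝ) - n) * |ρ k.natAbs| := by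
          rw [hFdef]
          simp only []
          rw [norm_mul, norm_mul, norm_exp_term, mul_one, hA, Complex.norm_real,
            Real.norm_eq_abs, Complex.norm_real, Real.norm_eq_abs]
          have hlt : (n : ℝ) - (k.natAbs : ℝ) < 0 := by
            have : (n : ℝ) < (k.natAbs : ℝ) := by exact_mod_cast hk'
            linarith
          rw [abs_of_neg hlt]
          ring
        rw [this]
        simp only [hHdef, hGdef]
        rw [if_pos hk']
      · rw [Set.indicator_of_notMem hk]
        exact hGnonneg _
    have hGtail : ∑' m : ℕ, G m = ∑' j : ℕ, ((j : ℝ) + 1) * |ρ (n + 1 + j)| := by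
      have h := Summable.sum_add_tsum_nat_add (f := G) (n + 1) hGsum
      have hz : ∑ i ∈ Finset.range (n + 1), G i = 0 := by
        refine Finset.sum_eq_zero fun i hi => ?_
        simp only [hGdef]
        rw [if_neg]
        simp only [Finset.mem_range] at hi
        omega
      rw [← h, hz, zero_add]
      refine tsum_congr fun i => ?_
      simp only [hGdef]
      rw [if_pos (by omega), show n + 1 + i = i + (n + 1) from by omega]
      push_cast
      ring
    have hstep2 : ∑' k : ℤ, H k = 2 * ∑' j : ℕ, ((j : ℝ) + 1) * |ρ (n + 1 + j)| := by
      have h1 : Summable fun m : ℕ => H (m : ℤ) := hGsum.congr fun m => by simp [hHdef]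
      have hneg : ∀ m : ℕ, H (-((m : ℤ) + 1)) = G (m + 1) := by
        intro m
        have he : (-((m : ℤ) + 1)) = -(((m + 1 : ℕ) : ℤ)) := by push_cast; ring
        simp only [hHdef, he, Int.natAbs_neg, Int.natAbs_natCast]
      have h2 : Summable fun m : ℕ => H (-((m : ℤ) + 1)) := by
        refine ((summable_nat_add_iff (f := G) 1).mpr hGsum).congr fun m => (hneg m).symm
      rw [tsum_of_nat_of_neg_add_one h1 h2]
      have e1 : ∑' m : ℕ, H (m : ℤ) = ∑' m : ℕ, G m :=
        tsum_congr fun m => by simp [hHdef]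
      have e2 : ∑' m : ℕ, H (-((m : ℤ) + 1)) = ∑' m : ℕ, G (m + 1) :=
        tsum_congr hneg
      have e3 : ∑' m : ℕ, G (m + 1) = ∑' m : ℕ, G m := by
        have h := Summable.sum_add_tsum_nat_add (f := G) 1 hGsum
        have hz : ∑ i ∈ Finset.range 1, G i = 0 := by
          simp [hGdef]
        rw [← h, hz, zero_add]
      rw [e1, e2, e3, hGtail]
      ring
    rw [hkey, norm_neg]
    exact hstep1.trans (le_of_eq hstep2)
  refine ⟨fun c n _ => main c n, ?_, ?_, ?_⟩
  · -- tendsto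
    have hb : ∀ n : ℕ, 2 * ∑' k : ℕ, ((k : ℝ) + 1) * |ρ (n + 1 + k)| ≤
        2 * ∑' j : ℕ, ((j + (n + 1) : ℕ) : ℝ) * |ρ (j + (n + 1))| := by
      intro n
      have := Summable.tsum_le_tsum (hTle n) (hTsum n) (hu n)
      linarith
    have h0 : ∀ n : ℕ, 0 ≤ 2 * ∑' k : ℕ, ((k : ℝ) + 1) * |ρ (n + 1 + k)| := by
      intro n
      have := tsum_nonneg (L := SummationFilter.unconditional ℕ) (fun j : ℕ => by positivity :
        ∀ j : ℕ, 0 ≤ ((j : ℝ) + 1) * |ρ (n + 1 + j)|)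
      linarith
    have ht : Tendsto (fun n : ℕ => 2 * ∑' j : ℕ, ((j + (n + 1) : ℕ) : ℝ) * |ρ (j + (n + 1))|)
        atTop (𝓝 0) := by
      have h1 := (tendsto_sum_nat_add (f := fun k : ℕ => (k : ℝ) * |ρ k|)).comp
        (tendsto_add_atTop_nat 1)
      have h2 := h1.const_mul (2 : ℝ)
      simpa using h2
    exact squeeze_zero h0 hb ht
  · -- uniform bound
    refine ⟨2 * (∑' k : ℕ, (k : ℝ) * |ρ k|) + ∑' k : ℤ, ((k.natAbs : ℝ) * |ρ k.natAbs|),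
      fun c n hn => ?_⟩
    have h1 : ‖Dc ρ c n - Sc ρ c * n‖ ≤
        ‖Dc ρ c n - Sc ρ c * n - S0c ρ c‖ + ‖S0c ρ c‖ := by
      calc ‖Dc ρ c n - Sc ρ c * n‖ = ‖(Dc ρ c n - Sc ρ c * n - S0c ρ c) + S0c ρ c‖ := by
            ring_nf
        _ ≤ _ := norm_add_le _ _
    have h2 : ‖S0c ρ c‖ ≤ ∑' k : ℤ, ((k.natAbs : ℝ) * |ρ k.natAbs|) := by
      rw [S0c, norm_neg]
      refine le_trans (norm_tsum_le_tsum_norm ?_) (le_of_eq (tsum_congr fun k => norm_g ρ c k))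
      simpa only [norm_g] using sumZk ρ hsum
    have h3 : 2 * ∑' k : ℕ, ((k : ℝ) + 1) * |ρ (n + 1 + k)| ≤
        2 * (∑' k : ℕ, (k : ℝ) * |ρ k|) := by
      have ha := Summable.tsum_le_tsum (hTle n) (hTsum n) (hu n)
      have hb := Summable.sum_add_tsum_nat_add (f := fun k : ℕ => (k : ℝ) * |ρ k|) (n + 1) hsum
      have hc : 0 ≤ ∑ i ∈ Finset.range (n + 1), (i : ℝ) * |ρ i| :=
        Finset.sum_nonneg fun i _ => by positivity
      linarith
    linarith [main c n]
  · -- continuity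
    have hcont : Continuous (S0c ρ) := by
      have : Continuous fun c : ℝ =>
          ∑' k : ℤ, Complex.exp (Complex.I * k * c) * ((|k| : ℤ) : ℂ) * (ρ k.natAbs : ℂ) := by
        refine continuous_tsum (fun k => ?_) (sumZk ρ hsum) (fun k x => le_of_eq (norm_g ρ x k))
        have : Continuous fun c : ℝ => Complex.exp (Complex.I * k * c) :=
          Complex.continuous_exp.comp ((continuous_const.mul Complex.continuous_ofReal))
        exact (this.mul continuous_const).mul continuous_const
      exact this.neg
    exact hcont.continuousOn
end

section
/- Let ρ : ℕ → ℝ and suppose |ρ(k)| ≤ C k^{−d} for all k ≥ 1, where C > 0 and 1 < d < 2. Then for every c ∈ ℝ and n ≥ 1, |D_c(n) − S(c)·n| ≤ 2C n^{2−d} / ((d−1)(2−d)), where D_c(n) = ∑_{k=−n}^{n} (n − |k|) e^{ikc} ρ(|k|) and S(c) = ∑_{k=−∞}^{∞} e^{ikc} ρ(|k|). -/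
open Filter Topology

lemma antitone_rpow_neg {r : ℝ} (hr : r ≤ 0) {a : ℝ} (ha : 0 < a) (b : ℝ) :
    AntitoneOn (fun x : ℝ => x ^ r) (Set.Icc a b) := by
  intro x hx y hy hxy
  exact Real.rpow_le_rpow_of_nonpos (lt_of_lt_of_le ha hx.1) hxy hr

lemma sumA {d : ℝ} (hd1 : 1 < d) (hd2 : d < 2) (n : ℕ) (hn : 1 ≤ n) :
    ∑ j ∈ Finset.Icc 1 n, (j : ℝ) ^ (1 - d) ≤ (n : ℝ) ^ (2 - d) / (2 - d) := by
  have h2d : (0:ℝ) < 2 - d := by linarith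
  have hcast : ((n - 1 : ℕ) : ℝ) = (n : ℝ) - 1 := by
    rw [Nat.cast_sub hn]; norm_num
  have h1n : (1 : ℝ) + ((n - 1 : ℕ) : ℝ) = (n : ℝ) := by rw [hcast]; ring
  have hsum : ∑ j ∈ Finset.Icc 1 n, (j : ℝ) ^ (1 - d)
      = 1 + ∑ i ∈ Finset.range (n - 1), ((1 : ℝ) + ((i + 1 : ℕ) : ℝ)) ^ (1 - d) := by
    rw [← Finset.Ico_add_one_right_eq_Icc, Finset.sum_Ico_eq_sum_range]
    have hn' : n + 1 - 1 = (n - 1) + 1 := by omega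
    rw [hn', Finset.sum_range_succ']
    rw [add_comm]
    congr 1
    · norm_num
    · apply Finset.sum_congr rfl
      intro i _
      push_cast
      ring_nf
  rw [hsum]
  have hint : ∑ i ∈ Finset.range (n - 1), (fun x : ℝ => x ^ (1 - d)) (1 + ((i + 1 : ℕ) : ℝ))
      ≤ ∫ x in (1:ℝ)..(1 + (n - 1 : ℕ)), x ^ (1 - d) :=
    AntitoneOn.sum_le_integral (antitone_rpow_neg (by linarith) one_pos _)
  have hval : ∫ x in (1:ℝ)..(1 + (n - 1 : ℕ)), x ^ (1 - d)
      = ((n : ℝ) ^ (2 - d) - 1) / (2 - d) := by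
    rw [integral_rpow (Or.inl (by linarith)), h1n]
    norm_num
    ring_nf
  rw [hval] at hint
  have e : (n:ℝ)^(2-d)/(2-d) - ((n:ℝ)^(2-d)-1)/(2-d) = 1/(2-d) := by ring
  have h1 : (1:ℝ) ≤ 1/(2-d) := by rw [le_div_iff₀ h2d]; linarith
  simp only at hint
  linarith

lemma sumB {d : ℝ} (hd1 : 1 < d) (n : ℕ) (hn : 1 ≤ n) :
    ∑' i : ℕ, ((i + n + 1 : ℕ) : ℝ) ^ (-d) ≤ (n : ℝ) ^ (1 - d) / (d - 1) := by
  have hd1' : (0:ℝ) < d - 1 := by linarith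
  have hnpos : (0:ℝ) < n := by exact_mod_cast hn
  have hsum0 : Summable (fun i : ℕ => ((i : ℝ)) ^ (-d)) :=
    Real.summable_nat_rpow.2 (by linarith)
  have hsum : Summable (fun i : ℕ => ((i + n + 1 : ℕ) : ℝ) ^ (-d)) := by
    have := (summable_nat_add_iff (f := fun i : ℕ => ((i : ℝ)) ^ (-d)) (n + 1)).2 hsum0
    refine this.congr fun i => ?_
    push_cast; ring_nf
  apply Summable.tsum_le_of_sum_le hsum
  intro s
  obtain ⟨M, hM⟩ := s.exists_nat_subset_range
  have hsub : ∑ i ∈ s, ((i + n + 1 : ℕ) : ℝ) ^ (-d)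
      ≤ ∑ i ∈ Finset.range M, ((i + n + 1 : ℕ) : ℝ) ^ (-d) :=
    Finset.sum_le_sum_of_subset_of_nonneg hM
      (fun i _ _ => Real.rpow_nonneg (by positivity) _)
  have hint : ∑ i ∈ Finset.range M, (fun x : ℝ => x ^ (-d)) ((n:ℝ) + ((i + 1 : ℕ) : ℝ))
      ≤ ∫ x in (n:ℝ)..((n:ℝ) + M), x ^ (-d) := by
    have := AntitoneOn.sum_le_integral (f := fun x : ℝ => x ^ (-d)) (x₀ := (n:ℝ)) (a := M)
      (antitone_rpow_neg (by linarith) hnpos _)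
    exact this
  have hval : ∫ x in (n:ℝ)..((n:ℝ) + M), x ^ (-d)
      = (((n:ℝ) + M) ^ (-d + 1) - (n:ℝ) ^ (-d + 1)) / (-d + 1) := by
    apply integral_rpow
    right
    constructor
    · intro h; linarith
    · intro h
      have hM0 : (0:ℝ) ≤ M := Nat.cast_nonneg M
      rcases Set.mem_uIcc.1 h with ⟨h1, _⟩ | ⟨h1, _⟩ <;> linarith
  have heq : ∑ i ∈ Finset.range M, ((i + n + 1 : ℕ) : ℝ) ^ (-d)
      = ∑ i ∈ Finset.range M, (fun x : ℝ => x ^ (-d)) ((n:ℝ) + ((i + 1 : ℕ) : ℝ)) := by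
    apply Finset.sum_congr rfl
    intro i _
    push_cast; ring_nf
  have hle2 : (((n:ℝ) + M) ^ (-d + 1) - (n:ℝ) ^ (-d + 1)) / (-d + 1)
      ≤ (n : ℝ) ^ (1 - d) / (d - 1) := by
    have h1 : (0:ℝ) ≤ ((n:ℝ) + M) ^ (-d + 1) := Real.rpow_nonneg (by positivity) _
    have e : (((n:ℝ) + M) ^ (-d + 1) - (n:ℝ) ^ (-d + 1)) / (-d + 1)
        = ((n:ℝ) ^ (-d + 1) - ((n:ℝ) + M) ^ (-d + 1)) / (d - 1) := by
      rw [div_eq_div_iff (by linarith) (by linarith)]; ring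
    rw [e]
    have : (-d + 1) = (1 - d) := by ring
    rw [this]; rw [this] at h1
    gcongr
    linarith
  calc ∑ i ∈ s, ((i + n + 1 : ℕ) : ℝ) ^ (-d)
      ≤ ∑ i ∈ Finset.range M, ((i + n + 1 : ℕ) : ℝ) ^ (-d) := hsub
    _ ≤ ∫ x in (n:ℝ)..((n:ℝ) + M), x ^ (-d) := by rw [heq]; exact hint
    _ ≤ (n : ℝ) ^ (1 - d) / (d - 1) := by rw [hval]; exact hle2

lemma sum_Icc_int (P : ℕ → ℝ) (hP0 : P 0 = 0) (n : ℕ) :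
    ∑ k ∈ Finset.Icc (-(n:ℤ)) (n:ℤ), P k.natAbs = 2 * ∑ j ∈ Finset.Icc 1 n, P j := by
  induction n with
  | zero => simp [hP0]
  | succ n ih =>
    have hset : Finset.Icc (-(n+1:ℤ)) (n+1:ℤ)
        = insert (-(n+1:ℤ)) (insert ((n+1:ℤ)) (Finset.Icc (-(n:ℤ)) (n:ℤ))) := by
      ext x; simp; omega
    have h1 : (-(n+1:ℤ)) ∉ insert ((n+1:ℤ)) (Finset.Icc (-(n:ℤ)) (n:ℤ)) := by
      simp; omega
    have h2 : ((n+1:ℤ)) ∉ Finset.Icc (-(n:ℤ)) (n:ℤ) := by simp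
    have hrhs : Finset.Icc 1 (n+1) = insert (n+1) (Finset.Icc 1 n) := by
      ext x; simp; omega
    have hna : (-(n+1:ℤ)).natAbs = n + 1 := by omega
    have hnb : ((n+1:ℤ)).natAbs = n + 1 := by omega
    have h3 : (n+1) ∉ Finset.Icc 1 n := by simp
    push_cast at hset h1 h2 hna hnb ⊢
    rw [hset, Finset.sum_insert h1, Finset.sum_insert h2, hrhs, Finset.sum_insert h3,
      hna, hnb, ih]
    ring

lemma tsum_compl_int (g : ℕ → ℝ) (hsum : Summable g) (n : ℕ) :
    ∑' (k : ↑(↑(Finset.Icc (-(n:ℤ)) (n:ℤ)) : Set ℤ)ᶜ), g (k:ℤ).natAbs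
      = 2 * ∑' i : ℕ, g (i + n + 1) := by
  set S : Set ℤ := ↑(Finset.Icc (-(n:ℤ)) (n:ℤ)) with hS
  have hgZ : Summable (fun k : ℤ => g k.natAbs) := by
    apply Summable.of_nat_of_neg
    · exact hsum.congr (fun j => by simp)
    · exact hsum.congr (fun j => by simp)
  set h : ℤ → ℝ := Sᶜ.indicator (fun k => g k.natAbs) with hh
  have hInd : Summable h := hgZ.indicator _
  have hmem : ∀ m : ℤ, m ∈ S ↔ -(n:ℤ) ≤ m ∧ m ≤ n := by
    intro m; simp [hS]
  have h1 : ∑' (k : ↑Sᶜ), g (k:ℤ).natAbs = ∑' k : ℤ, h k :=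
    tsum_subtype Sᶜ (fun k => g k.natAbs)
  rw [h1]
  have hposS : Summable (fun j : ℕ => h j) :=
    hInd.comp_injective (fun a b hab => by exact_mod_cast hab)
  have hnegS : Summable (fun j : ℕ => h (-(j+1))) :=
    hInd.comp_injective (fun a b hab => by omega)
  rw [tsum_of_nat_of_neg_add_one hposS hnegS]
  have hpos : ∑' j : ℕ, h j = ∑' i : ℕ, g (i + n + 1) := by
    rw [← Summable.sum_add_tsum_nat_add (n+1) hposS]
    have hz : ∑ j ∈ Finset.range (n+1), h j = 0 := by
      apply Finset.sum_eq_zero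
      intro j hj
      apply Set.indicator_of_notMem
      simp only [Set.mem_compl_iff, not_not]
      rw [hmem]
      constructor <;> [omega; skip]
      exact_mod_cast Nat.le_of_lt_succ (Finset.mem_range.1 hj)
    rw [hz, zero_add]
    apply tsum_congr
    intro i
    have : ((i + (n+1) : ℕ) : ℤ) ∉ S := by
      rw [hmem]; push_cast; omega
    rw [hh, Set.indicator_of_mem (Set.mem_compl this)]
    congr 1
  have hneg : ∑' j : ℕ, h (-(j+1)) = ∑' i : ℕ, g (i + n + 1) := by
    rw [← Summable.sum_add_tsum_nat_add n hnegS]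
    have hz : ∑ j ∈ Finset.range n, h (-(j+1)) = 0 := by
      apply Finset.sum_eq_zero
      intro j hj
      apply Set.indicator_of_notMem
      simp only [Set.mem_compl_iff, not_not]
      rw [hmem]
      have := Finset.mem_range.1 hj
      omega
    rw [hz, zero_add]
    apply tsum_congr
    intro i
    have : (-(((i + n : ℕ):ℤ)+1)) ∉ S := by
      rw [hmem]; push_cast; omega
    rw [hh, Set.indicator_of_mem (Set.mem_compl this)]
    congr 1
  rw [hpos, hneg]
  ring

set_option maxHeartbeats 1000000

/-- if `|ρ(k)| ≤ C k^{-d}` with `C > 0` and `1 < d < 2`, then for every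
`c` and `n ≥ 1`, `|D_c(n) - S(c)n| ≤ 2C n^{2-d}/((d-1)(2-d))`. -/
theorem stmt11 (ρ : ℕ → ℝ) (C d : ℝ) (hC : 0 < C) (hd1 : 1 < d) (hd2 : d < 2)
    (hdecay : ∀ k : ℕ, 1 ≤ k → |ρ k| ≤ C * (k : ℝ) ^ (-d)) :
    ∀ (c : ℝ) (n : ℕ), 1 ≤ n →
      ‖Dc ρ c n - Sc ρ c * n‖ ≤
        2 * C * (n : ℝ) ^ (2 - d) / ((d - 1) * (2 - d)) := by
  intro c n hn
  have hd1' : (0:ℝ) < d - 1 := by linarith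
  have h2d : (0:ℝ) < 2 - d := by linarith
  have hnpos : (0:ℝ) < n := by exact_mod_cast hn
  set F : ℤ → ℂ := fun k => Complex.exp (Complex.I * k * c) * (ρ k.natAbs : ℂ) with hF
  set s : Finset ℤ := Finset.Icc (-(n:ℤ)) (n:ℤ) with hs
  have habs : ∀ k : ℤ, ‖F k‖ = |ρ k.natAbs| := by
    intro k
    rw [hF]
    simp [Complex.norm_exp,
      Complex.mul_re, Complex.mul_im]
  -- summability
  have hρsum : Summable (fun j : ℕ => |ρ j|) := by
    apply Summable.of_norm_bounded_eventually_nat (g := fun j => C * (j:ℝ)^(-d))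
      ((Real.summable_nat_rpow.2 (by linarith)).mul_left C)
    filter_upwards [eventually_ge_atTop 1] with j hj
    rw [Real.norm_eq_abs, abs_abs]
    exact hdecay j hj
  have hgZ : Summable (fun k : ℤ => |ρ k.natAbs|) :=
    Summable.of_nat_of_neg (hρsum.congr (fun j => by simp)) (hρsum.congr (fun j => by simp))
  have hFnorm : Summable (fun k : ℤ => ‖F k‖) := hgZ.congr (fun k => (habs k).symm)
  have hFsum : Summable F := hFnorm.of_norm
  -- split the power spectrum
  have hSc : Sc ρ c = ∑ k ∈ s, F k + ∑' (k : ↑(↑s : Set ℤ)ᶜ), F k :=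
    (Summable.sum_add_tsum_compl hFsum).symm
  have hDc : Dc ρ c n = ∑ k ∈ s, ((n:ℂ) - ((|k| : ℤ) : ℂ)) * F k := by
    rw [Dc]
    exact Finset.sum_congr rfl (fun k _ => by rw [hF]; ring)
  have key : Dc ρ c n - Sc ρ c * n
      = (∑ k ∈ s, -(((|k| : ℤ) : ℂ)) * F k) - (∑' (k : ↑(↑s : Set ℤ)ᶜ), F k) * n := by
    rw [hDc, hSc, add_mul, sub_add_eq_sub_sub, Finset.sum_mul, ← Finset.sum_sub_distrib]
    congr 1
    exact Finset.sum_congr rfl (fun k _ => by ring)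
  rw [key]
  -- term norms
  have hterm : ∀ k : ℤ, ‖-(((|k| : ℤ) : ℂ)) * F k‖ = (k.natAbs : ℝ) * |ρ k.natAbs| := by
    intro k
    rw [norm_mul, norm_neg, habs k]
    congr 1
    rw [Int.abs_eq_natAbs]
    push_cast
    simp [Nat.cast_natAbs]
  -- bound on the finite part
  have hfin : ∑ k ∈ s, ‖-(((|k| : ℤ) : ℂ)) * F k‖ ≤ 2 * C * ((n:ℝ)^(2-d)/(2-d)) := by
    have e1 : ∑ k ∈ s, ‖-(((|k| : ℤ) : ℂ)) * F k‖
        = 2 * ∑ j ∈ Finset.Icc 1 n, (j : ℝ) * |ρ j| := by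
      rw [Finset.sum_congr rfl (fun k _ => hterm k), hs]
      exact sum_Icc_int (fun m => (m:ℝ) * |ρ m|) (by simp) n
    rw [e1]
    have e2 : ∑ j ∈ Finset.Icc 1 n, (j : ℝ) * |ρ j| ≤ C * ∑ j ∈ Finset.Icc 1 n, (j:ℝ)^(1-d) := by
      rw [Finset.mul_sum]
      apply Finset.sum_le_sum
      intro j hj
      have hj1 : 1 ≤ j := (Finset.mem_Icc.1 hj).1
      have hjpos : (0:ℝ) < j := by exact_mod_cast hj1
      have : (j:ℝ) * (C * (j:ℝ)^(-d)) = C * (j:ℝ)^(1-d) := by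
        rw [show (1 - d) = 1 + (-d) by ring, Real.rpow_add hjpos, Real.rpow_one]
        ring
      calc (j:ℝ) * |ρ j| ≤ (j:ℝ) * (C * (j:ℝ)^(-d)) := by
            exact mul_le_mul_of_nonneg_left (hdecay j hj1) (by positivity)
        _ = C * (j:ℝ)^(1-d) := this
    have e3 := sumA hd1 hd2 n hn
    calc 2 * ∑ j ∈ Finset.Icc 1 n, (j : ℝ) * |ρ j|
        ≤ 2 * (C * ∑ j ∈ Finset.Icc 1 n, (j:ℝ)^(1-d)) := by linarith
      _ ≤ 2 * C * ((n:ℝ)^(2-d)/(2-d)) := by nlinarith [e3]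
  -- bound on the tail
  have htail : ‖(∑' (k : ↑(↑s : Set ℤ)ᶜ), F k) * (n:ℂ)‖
      ≤ 2 * C * ((n:ℝ)^(1-d)/(d-1)) * n := by
    rw [norm_mul]
    have hnn : ‖(n:ℂ)‖ = (n:ℝ) := by
      rw [Complex.norm_natCast]
    rw [hnn]
    apply mul_le_mul_of_nonneg_right _ hnpos.le
    have hsub : Summable (fun k : ↑(↑s : Set ℤ)ᶜ => ‖F (k:ℤ)‖) := hFnorm.subtype _
    calc ‖∑' (k : ↑(↑s : Set ℤ)ᶜ), F k‖ ≤ ∑' (k : ↑(↑s : Set ℤ)ᶜ), ‖F (k:ℤ)‖ :=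
          norm_tsum_le_tsum_norm hsub
      _ = ∑' (k : ↑(↑s : Set ℤ)ᶜ), |ρ (k:ℤ).natAbs| := tsum_congr (fun k => habs _)
      _ = 2 * ∑' i : ℕ, |ρ (i + n + 1)| := by
          rw [hs]; exact tsum_compl_int (fun m => |ρ m|) hρsum n
      _ ≤ 2 * (C * ((n:ℝ)^(1-d)/(d-1))) := by
          have hls : Summable (fun i : ℕ => |ρ (i + n + 1)|) :=
            ((summable_nat_add_iff (n+1)).2 hρsum).congr fun i => by rw [Nat.add_assoc]
          have hrs : Summable (fun i : ℕ => C * ((i + n + 1 : ℕ):ℝ)^(-d)) := by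
            apply Summable.mul_left
            have := (summable_nat_add_iff (f := fun i : ℕ => ((i : ℝ)) ^ (-d)) (n + 1)).2
              (Real.summable_nat_rpow.2 (by linarith : -d < -1))
            refine this.congr fun i => ?_
            push_cast; ring_nf
          have hle : ∑' i : ℕ, |ρ (i + n + 1)| ≤ ∑' i : ℕ, C * ((i + n + 1 : ℕ):ℝ)^(-d) :=
            Summable.tsum_le_tsum (fun i => hdecay (i + n + 1) (by omega)) hls hrs
          have hle2 : ∑' i : ℕ, C * ((i + n + 1 : ℕ):ℝ)^(-d)
              = C * ∑' i : ℕ, ((i + n + 1 : ℕ):ℝ)^(-d) := tsum_mul_left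
          have := sumB hd1 n hn
          nlinarith [hle, hle2]
      _ = 2 * C * ((n:ℝ)^(1-d)/(d-1)) := by ring
  -- combine
  have hpow : (n:ℝ)^(1-d) * n = (n:ℝ)^(2-d) := by
    nth_rewrite 2 [← Real.rpow_one (n:ℝ)]
    rw [← Real.rpow_add hnpos]
    ring_nf
  have hfinal : 2 * C * ((n:ℝ)^(2-d)/(2-d)) + 2 * C * ((n:ℝ)^(1-d)/(d-1)) * n
      = 2 * C * (n : ℝ) ^ (2 - d) / ((d - 1) * (2 - d)) := by
    have t2 : 2 * C * ((n:ℝ)^(1-d)/(d-1)) * n = 2 * C * ((n:ℝ)^(2-d)/(d-1)) := by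
      rw [← hpow]; ring
    rw [t2]
    field_simp
    ring
  calc ‖(∑ k ∈ s, -(((|k| : ℤ) : ℂ)) * F k) - (∑' (k : ↑(↑s : Set ℤ)ᶜ), F k) * (n:ℂ)‖
      ≤ ‖∑ k ∈ s, -(((|k| : ℤ) : ℂ)) * F k‖ + ‖(∑' (k : ↑(↑s : Set ℤ)ᶜ), F k) * (n:ℂ)‖ :=
        norm_sub_le _ _
    _ ≤ ∑ k ∈ s, ‖-(((|k| : ℤ) : ℂ)) * F k‖ + ‖(∑' (k : ↑(↑s : Set ℤ)ᶜ), F k) * (n:ℂ)‖ := by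
        have := norm_sum_le s (fun k => -(((|k| : ℤ) : ℂ)) * F k)
        linarith
    _ ≤ 2 * C * ((n:ℝ)^(2-d)/(2-d)) + 2 * C * ((n:ℝ)^(1-d)/(d-1)) * n := by
        linarith [hfin, htail]
    _ = 2 * C * (n : ℝ) ^ (2 - d) / ((d - 1) * (2 - d)) := hfinal
end

section
/- Let ρ : ℕ → ℝ and suppose |ρ(k)| ≤ C k^{−d} for all k ≥ 1, where C > 0 and d > 2. Then for every c ∈ ℝ and n ≥ 1, |D_c(n) − S(c)·n − S_0(c)| ≤ 2C (1/((d−1)(d−2)) + 1/n) · n^{−(d−2)}, where D_c(n) = ∑_{k=−n}^{n} (n − |k|) e^{ikc} ρ(|k|), S(c) = ∑_{k=−∞}^{∞} e^{ikc} ρ(|k|), and S_0(c) = −∑_{k=−∞}^{∞} e^{ikc} |k| ρ(|k|). -/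
open Filter Topology

private lemma key_tail (d : ℝ) (hd : 2 < d) (x : ℝ) (hx : 1 ≤ x) :
    ∑' j : ℕ, (((j : ℝ) + 1) * (x + j + 1) ^ (-d)) ≤
      (1 / ((d - 1) * (d - 2)) + 1 / x) * x ^ (-(d - 2)) := by
  have hx0 : (0:ℝ) < x := lt_of_lt_of_le one_pos hx
  have hd1 : (0:ℝ) < d - 1 := by linarith
  have hd2 : (0:ℝ) < d - 2 := by linarith
  have h1ne : (1:ℝ) - d ≠ 0 := by linarith
  have h2ne : (2:ℝ) - d ≠ 0 := by linarith
  set G : ℝ → ℝ := fun y => y ^ (2 - d) / (2 - d) + (1 - x) * y ^ (1 - d) / (1 - d) with hG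
  have hG' : ∀ y : ℝ, 1 ≤ y → HasDerivAt G ((y + 1 - x) * y ^ (-d)) y := by
    intro y hy
    have hy0 : (0:ℝ) < y := lt_of_lt_of_le one_pos hy
    have h1 : HasDerivAt (fun y : ℝ => y ^ (2 - d)) ((2 - d) * y ^ (2 - d - 1)) y :=
      Real.hasDerivAt_rpow_const (Or.inl hy0.ne')
    have h2 : HasDerivAt (fun y : ℝ => y ^ (1 - d)) ((1 - d) * y ^ (1 - d - 1)) y :=
      Real.hasDerivAt_rpow_const (Or.inl hy0.ne')
    have h := (h1.div_const (2 - d)).add ((h2.const_mul (1 - x)).div_const (1 - d))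
    refine h.congr_deriv ?_
    have e1 : 2 - d - 1 = 1 - d := by ring
    have e2 : 1 - d - 1 = -d := by ring
    have e3 : y ^ (1 - d) = y * y ^ (-d) := by
      rw [show (1 : ℝ) - d = 1 + -d by ring, Real.rpow_add hy0, Real.rpow_one]
    rw [e1, e2, e3]
    field_simp
    ring
  have hstep : ∀ j : ℕ, ((j:ℝ) + 1) * (x + j + 1) ^ (-d) ≤ G (x + j + 1) - G (x + j) := by
    intro j
    have hj0 : (0:ℝ) ≤ (j:ℝ) := Nat.cast_nonneg j
    have hj1 : (1:ℝ) ≤ x + j := by linarith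
    have hab : x + (j:ℝ) < x + j + 1 := by linarith
    obtain ⟨y, hy, hyeq⟩ := exists_hasDerivAt_eq_slope G (fun y => (y + 1 - x) * y ^ (-d)) hab
      (fun z hz => ((hG' z (le_trans hj1 hz.1)).continuousAt.continuousWithinAt))
      (fun z hz => hG' z (le_trans hj1 hz.1.le))
    have hden : x + (j:ℝ) + 1 - (x + j) = 1 := by ring
    rw [hden, div_one] at hyeq
    rw [← hyeq]
    have hy0 : (0:ℝ) < y := lt_of_le_of_lt (by linarith : (0:ℝ) ≤ x + j) hy.1
    apply mul_le_mul
    · linarith [hy.1]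
    · exact Real.rpow_le_rpow_of_nonpos hy0 hy.2.le (by linarith)
    · positivity
    · linarith [hy.1]
  have hsummand_le : ∀ j : ℕ, ((j:ℝ) + 1) * (x + j + 1) ^ (-d) ≤ ((j:ℝ) + 1) ^ (1 - d) := by
    intro j
    have hj0 : (0:ℝ) < (j:ℝ) + 1 := by positivity
    calc ((j:ℝ) + 1) * (x + j + 1) ^ (-d)
        ≤ ((j:ℝ) + 1) * ((j:ℝ) + 1) ^ (-d) := by
          apply mul_le_mul_of_nonneg_left _ hj0.le
          exact Real.rpow_le_rpow_of_nonpos hj0 (by linarith) (by linarith)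
      _ = ((j:ℝ) + 1) ^ (1 - d) := by
          rw [show (1:ℝ) - d = 1 + -d by ring, Real.rpow_add hj0, Real.rpow_one]
  have hmaj : Summable (fun j : ℕ => ((j:ℝ) + 1) ^ (1 - d)) := by
    have h0 := (summable_nat_add_iff (f := fun m : ℕ => (m:ℝ) ^ (1 - d)) 1).mpr
      (Real.summable_nat_rpow.mpr (by linarith))
    simpa using h0
  have hsummable : Summable (fun j : ℕ => ((j:ℝ) + 1) * (x + j + 1) ^ (-d)) :=
    Summable.of_nonneg_of_le (fun j => by positivity) hsummand_le hmaj
  have hpart : ∀ N : ℕ, ∑ j ∈ Finset.range N, ((j:ℝ) + 1) * (x + j + 1) ^ (-d)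
      ≤ G (x + N) - G x := by
    intro N
    calc ∑ j ∈ Finset.range N, ((j:ℝ) + 1) * (x + j + 1) ^ (-d)
        ≤ ∑ j ∈ Finset.range N, (G (x + (j + 1 : ℕ)) - G (x + j)) := by
          apply Finset.sum_le_sum
          intro j _
          have : G (x + ((j:ℕ) + 1 : ℕ)) = G (x + j + 1) := by push_cast; ring_nf
          rw [this]
          exact hstep j
      _ = G (x + N) - G (x + (0:ℕ)) := Finset.sum_range_sub (fun j : ℕ => G (x + j)) N
      _ = G (x + N) - G x := by norm_num
  have hxn : Tendsto (fun N : ℕ => x + (N:ℝ)) atTop atTop :=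
    tendsto_atTop_add_const_left atTop x tendsto_natCast_atTop_atTop
  have hGy : Tendsto G atTop (𝓝 0) := by
    have h1 : Tendsto (fun y : ℝ => y ^ (2 - d) / (2 - d)) atTop (𝓝 0) := by
      have h := (tendsto_rpow_neg_atTop hd2).div_const (2 - d)
      rw [show (2:ℝ) - d = -(d - 2) by ring]
      simpa using h
    have h2 : Tendsto (fun y : ℝ => (1 - x) * y ^ (1 - d) / (1 - d)) atTop (𝓝 0) := by
      have h := ((tendsto_rpow_neg_atTop hd1).const_mul (1 - x)).div_const (1 - d)
      rw [show (1:ℝ) - d = -(d - 1) by ring]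
      simpa using h
    simpa using h1.add h2
  have htend : Tendsto (fun N : ℕ => G (x + N) - G x) atTop (𝓝 (0 - G x)) :=
    ((hGy.comp hxn).sub tendsto_const_nhds)
  have hle : ∑' j : ℕ, (((j:ℝ) + 1) * (x + j + 1) ^ (-d)) ≤ 0 - G x :=
    le_of_tendsto_of_tendsto' hsummable.hasSum.tendsto_sum_nat htend hpart
  refine hle.trans ?_
  have e2 : x ^ (-(d - 2)) = x ^ (2 - d) := by rw [show -(d - 2) = 2 - d by ring]
  have e3 : x ^ ((2:ℝ) - d) = x * x ^ (1 - d) := by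
    rw [show (2:ℝ) - d = 1 + (1 - d) by ring, Real.rpow_add hx0, Real.rpow_one]
  have ht : (0:ℝ) ≤ x ^ (1 - d) := Real.rpow_nonneg hx0.le _
  have hL : 0 - G x = x ^ (1 - d) * (x / (d - 2) - (x - 1) / (d - 1)) := by
    rw [hG]
    dsimp only
    rw [e3]
    field_simp
    ring
  have hR : (1 / ((d - 1) * (d - 2)) + 1 / x) * x ^ (-(d - 2))
      = x ^ (1 - d) * (x / ((d - 1) * (d - 2)) + 1) := by
    rw [e2, e3]
    field_simp
  rw [hL, hR]
  apply mul_le_mul_of_nonneg_left _ ht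
  rw [div_sub_div _ _ hd2.ne' hd1.ne', div_le_iff₀ (by positivity)]
  have heq : (x / ((d - 1) * (d - 2)) + 1) * ((d - 2) * (d - 1)) = x + (d - 2) * (d - 1) := by
    field_simp
  rw [heq]
  nlinarith [sq_nonneg (d - 2)]

set_option maxHeartbeats 1600000 in
/-- if `|ρ(k)| ≤ C k^{-d}` with `C > 0` and `d > 2`, then for every `c`
and `n ≥ 1`, `|D_c(n) - S(c)n - S₀(c)| ≤ 2C (1/((d-1)(d-2)) + 1/n) n^{-(d-2)}`. -/
theorem stmt12 (ρ : ℕ → ℝ) (C d : ℝ) (hC : 0 < C) (hd : 2 < d)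
    (hdecay : ∀ k : ℕ, 1 ≤ k → |ρ k| ≤ C * (k : ℝ) ^ (-d)) :
    ∀ (c : ℝ) (n : ℕ), 1 ≤ n →
      ‖Dc ρ c n - Sc ρ c * n - S0c ρ c‖ ≤
        2 * C * (1 / ((d - 1) * (d - 2)) + 1 / n) * (n : ℝ) ^ (-(d - 2)) := by
  intro c n hn
  have hd1 : (0:ℝ) < d - 1 := by linarith
  have hd2 : (0:ℝ) < d - 2 := by linarith
  have hn0 : (0:ℝ) < (n:ℝ) := by exact_mod_cast Nat.pos_of_ne_zero (by omega)
  set w : ℤ → ℂ :=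
    fun k => ((n : ℂ) - ((|k| : ℤ) : ℂ)) * Complex.exp (Complex.I * k * c) * (ρ k.natAbs : ℂ)
    with hw
  have hDc : Dc ρ c n = ∑ k ∈ Finset.Icc (-(n:ℤ)) (n:ℤ), w k := rfl
  -- norms of the terms
  have hexp : ∀ k : ℤ, ‖Complex.exp (Complex.I * k * c)‖ = 1 := by
    intro k
    rw [show Complex.I * k * c = (((k:ℝ) * c : ℝ) : ℂ) * Complex.I by push_cast; ring]
    exact Complex.norm_exp_ofReal_mul_I _
  have hwnorm : ∀ k : ℤ, ‖w k‖ = |(n:ℝ) - (k.natAbs:ℝ)| * |ρ k.natAbs| := by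
    intro k
    rw [hw]
    simp only [norm_mul]
    rw [show ((n:ℂ) - ((|k| : ℤ) : ℂ)) = (((n:ℝ) - (k.natAbs:ℝ) : ℝ) : ℂ) by
      simp only [Int.abs_eq_natAbs, Int.cast_natCast, Complex.ofReal_sub,
        Complex.ofReal_natCast]]
    rw [hexp, Complex.norm_real, Real.norm_eq_abs, Complex.norm_real, Real.norm_eq_abs]
    ring
  -- the summable majorant
  set Mn : ℕ → ℝ := fun m => ((n:ℝ) + m) * |ρ m| with hMn
  have hMn_sum : Summable Mn := by
    rw [← summable_nat_add_iff 1]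
    have hshift : Summable (fun m : ℕ => ((m:ℝ) + 1) ^ (1 - d)) := by
      have h0 := (summable_nat_add_iff (f := fun m : ℕ => (m:ℝ) ^ (1 - d)) 1).mpr
        (Real.summable_nat_rpow.mpr (by linarith))
      simpa using h0
    apply Summable.of_nonneg_of_le (fun m => by positivity)
      (f := fun m : ℕ => C * ((n:ℝ) + 1) * (((m:ℝ) + 1) ^ (1 - d))) _
      (hshift.mul_left _)
    intro m
    have hm0 : (0:ℝ) ≤ (m:ℝ) := Nat.cast_nonneg m
    calc ((n:ℝ) + (m+1:ℕ)) * |ρ (m+1)|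
        ≤ (((n:ℝ) + 1) * ((m:ℝ) + 1)) * (C * ((m+1:ℕ):ℝ) ^ (-d)) := by
          apply mul_le_mul _ (hdecay (m+1) (by omega)) (abs_nonneg _) (by positivity)
          push_cast
          nlinarith [hn0]
      _ = C * ((n:ℝ) + 1) * (((m:ℝ) + 1) * ((m:ℝ) + 1) ^ (-d)) := by push_cast; ring
      _ = C * ((n:ℝ) + 1) * (((m:ℝ) + 1) ^ (1 - d)) := by
          rw [show (1:ℝ) - d = 1 + -d by ring, Real.rpow_add (by positivity), Real.rpow_one]
  have hMz_sum : Summable (fun k : ℤ => Mn k.natAbs) := by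
    apply Summable.of_nat_of_neg
    · simpa using hMn_sum
    · simpa using hMn_sum
  have hn1 : (1:ℝ) ≤ (n:ℝ) := by exact_mod_cast hn
  have hone_le : ∀ m : ℕ, (1:ℝ) ≤ (n:ℝ) + m := fun m => by
    have : (0:ℝ) ≤ (m:ℝ) := Nat.cast_nonneg m
    linarith
  -- summability of the pieces
  have hf1 : Summable (fun k : ℤ => Complex.exp (Complex.I * k * c) * (ρ k.natAbs : ℂ)) := by
    apply Summable.of_norm_bounded hMz_sum
    intro k
    rw [norm_mul, hexp, Complex.norm_real, Real.norm_eq_abs, one_mul]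
    show |ρ k.natAbs| ≤ ((n:ℝ) + k.natAbs) * |ρ k.natAbs|
    have := hone_le k.natAbs
    nlinarith [abs_nonneg (ρ k.natAbs)]
  have hf2 : Summable (fun k : ℤ =>
      Complex.exp (Complex.I * k * c) * ((|k| : ℤ) : ℂ) * (ρ k.natAbs : ℂ)) := by
    apply Summable.of_norm_bounded hMz_sum
    intro k
    rw [norm_mul, norm_mul, hexp, one_mul, Complex.norm_real, Real.norm_eq_abs]
    rw [show (((|k| : ℤ) : ℂ)) = (((k.natAbs : ℝ)) : ℂ) by
      simp only [Int.abs_eq_natAbs, Int.cast_natCast, Complex.ofReal_natCast]]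
    rw [Complex.norm_real, Real.norm_eq_abs, abs_of_nonneg (Nat.cast_nonneg _)]
    show (k.natAbs : ℝ) * |ρ k.natAbs| ≤ ((n:ℝ) + k.natAbs) * |ρ k.natAbs|
    have h := abs_nonneg (ρ k.natAbs)
    nlinarith [hn0.le]
  have hwf : ∀ k : ℤ, (n:ℂ) * (Complex.exp (Complex.I * k * c) * (ρ k.natAbs : ℂ))
      - Complex.exp (Complex.I * k * c) * ((|k| : ℤ) : ℂ) * (ρ k.natAbs : ℂ) = w k := by
    intro k; rw [hw]; ring
  have hwsum : Summable w := ((hf1.mul_left _).sub hf2).congr hwf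
  have htsum_w : ∑' k : ℤ, w k = Sc ρ c * (n:ℂ) + S0c ρ c := by
    rw [tsum_congr (fun k => (hwf k).symm), Summable.tsum_sub (hf1.mul_left _) hf2, tsum_mul_left]
    rw [Sc, S0c]
    ring
  have hkey := Summable.sum_add_tsum_compl (s := Finset.Icc (-(n:ℤ)) (n:ℤ)) hwsum
  have hdiff : Dc ρ c n - Sc ρ c * n - S0c ρ c
      = -∑' (x : ↑((Finset.Icc (-(n:ℤ)) (n:ℤ) : Finset ℤ) : Set ℤ)ᶜ), w ↑x := by
    rw [hDc]
    linear_combination hkey + htsum_w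
  rw [hdiff, norm_neg]
  -- the dominating function
  set gn : ℕ → ℝ := fun m => if m ≤ n then 0 else C * ((m:ℝ) - n) * (m:ℝ) ^ (-d) with hgn
  have hgn_nonneg : ∀ m : ℕ, 0 ≤ gn m := by
    intro m
    rw [hgn]
    dsimp only
    split
    · exact le_refl _
    · rename_i hm
      have : (n:ℝ) ≤ (m:ℝ) := by exact_mod_cast Nat.le_of_lt (by omega)
      have h1 : (0:ℝ) ≤ (m:ℝ) - n := by linarith
      exact mul_nonneg (mul_nonneg hC.le h1) (Real.rpow_nonneg (Nat.cast_nonneg _) _)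
  have hgn_sum : Summable gn := by
    apply Summable.of_nonneg_of_le hgn_nonneg
      (f := fun m : ℕ => C * (m:ℝ) ^ (1 - d)) _
      (((Real.summable_nat_rpow (p := 1 - d)).mpr (by linarith)).mul_left C)
    intro m
    rw [hgn]
    dsimp only
    split
    · positivity
    · rename_i hm
      have hm1 : (1:ℝ) ≤ (m:ℝ) := by exact_mod_cast Nat.one_le_iff_ne_zero.mpr (by omega)
      have hm0 : (0:ℝ) < (m:ℝ) := by linarith
      rw [show (1:ℝ) - d = 1 + -d by ring, Real.rpow_add hm0, Real.rpow_one]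
      have h2 : (0:ℝ) ≤ (m:ℝ) ^ (-d) := Real.rpow_nonneg hm0.le _
      calc C * ((m:ℝ) - n) * (m:ℝ) ^ (-d) ≤ C * (m:ℝ) * (m:ℝ) ^ (-d) := by
            apply mul_le_mul_of_nonneg_right _ h2
            nlinarith [hn0]
        _ = C * ((m:ℝ) * (m:ℝ) ^ (-d)) := by ring
  have hg_sum : Summable (fun k : ℤ => gn k.natAbs) := by
    apply Summable.of_nat_of_neg
    · simpa using hgn_sum
    · simpa using hgn_sum
  have hw_norm_sum : Summable (fun k : ℤ => ‖w k‖) := by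
    apply Summable.of_nonneg_of_le (fun k => norm_nonneg _) _ hMz_sum
    intro k
    rw [hwnorm k, hMn]
    apply mul_le_mul_of_nonneg_right _ (abs_nonneg _)
    calc |(n:ℝ) - (k.natAbs:ℝ)| ≤ |(n:ℝ)| + |(k.natAbs:ℝ)| := abs_sub _ _
      _ = (n:ℝ) + k.natAbs := by
          rw [abs_of_nonneg hn0.le, abs_of_nonneg (Nat.cast_nonneg _)]
  have hmem : ∀ k : ℤ, k ∉ Finset.Icc (-(n:ℤ)) (n:ℤ) → n < k.natAbs := by
    intro k hk
    simp only [Finset.mem_Icc] at hk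
    omega
  have hterm : ∀ (x : ↑((Finset.Icc (-(n:ℤ)) (n:ℤ) : Finset ℤ) : Set ℤ)ᶜ),
      ‖w ↑x‖ ≤ gn (↑x : ℤ).natAbs := by
    intro x
    have hx : n < (↑x : ℤ).natAbs := hmem _ (by simpa using x.2)
    rw [hwnorm, hgn]
    dsimp only
    rw [if_neg (by omega)]
    have hcast : (n:ℝ) < ((↑x : ℤ).natAbs : ℝ) := by exact_mod_cast hx
    rw [abs_sub_comm, abs_of_nonneg (by linarith)]
    have hdec := hdecay (↑x : ℤ).natAbs (by omega)
    calc (((↑x : ℤ).natAbs : ℝ) - n) * |ρ (↑x : ℤ).natAbs|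
        ≤ (((↑x : ℤ).natAbs : ℝ) - n) * (C * ((↑x : ℤ).natAbs : ℝ) ^ (-d)) :=
          mul_le_mul_of_nonneg_left hdec (by linarith)
      _ = C * (((↑x : ℤ).natAbs : ℝ) - n) * ((↑x : ℤ).natAbs : ℝ) ^ (-d) := by ring
  -- chain of bounds
  have h1 : ‖∑' (x : ↑((Finset.Icc (-(n:ℤ)) (n:ℤ) : Finset ℤ) : Set ℤ)ᶜ), w ↑x‖
      ≤ ∑' (x : ↑((Finset.Icc (-(n:ℤ)) (n:ℤ) : Finset ℤ) : Set ℤ)ᶜ), ‖w ↑x‖ :=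
    norm_tsum_le_tsum_norm (hw_norm_sum.subtype _)
  have h2 : ∑' (x : ↑((Finset.Icc (-(n:ℤ)) (n:ℤ) : Finset ℤ) : Set ℤ)ᶜ), ‖w ↑x‖
      ≤ ∑' (x : ↑((Finset.Icc (-(n:ℤ)) (n:ℤ) : Finset ℤ) : Set ℤ)ᶜ), gn (↑x : ℤ).natAbs :=
    Summable.tsum_le_tsum hterm (hw_norm_sum.subtype _) (hg_sum.subtype _)
  have h3 : ∑' (x : ↑((Finset.Icc (-(n:ℤ)) (n:ℤ) : Finset ℤ) : Set ℤ)ᶜ), gn (↑x : ℤ).natAbs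
      ≤ ∑' k : ℤ, gn k.natAbs :=
    Summable.tsum_subtype_le _ _ (fun k => hgn_nonneg _) hg_sum
  -- compute the ℤ-tsum as twice a ℕ-tsum
  have hsn1 : Summable (fun m : ℕ => gn (m + 1)) := (summable_nat_add_iff 1).mpr hgn_sum
  have hnat1 : ∀ m : ℕ, ((m:ℤ) + 1).natAbs = m + 1 := fun m => by omega
  have hnat2 : ∀ m : ℕ, (-((m:ℤ) + 1)).natAbs = m + 1 := fun m => by omega
  have hpos : Summable (fun m : ℕ => gn ((m:ℤ) + 1).natAbs) := by
    apply hsn1.congr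
    intro m
    rw [hnat1]
  have hneg : Summable (fun m : ℕ => gn (-((m:ℤ) + 1)).natAbs) := by
    apply hsn1.congr
    intro m
    rw [hnat2]
  have h4 : ∑' k : ℤ, gn k.natAbs = 2 * ∑' m : ℕ, gn (m + 1) := by
    rw [tsum_of_add_one_of_neg_add_one (f := fun k : ℤ => gn k.natAbs) hpos hneg]
    have e1 : (fun m : ℕ => gn ((m:ℤ) + 1).natAbs) = fun m : ℕ => gn (m + 1) := by
      funext m; rw [hnat1]
    have e2 : (fun m : ℕ => gn (-((m:ℤ) + 1)).natAbs) = fun m : ℕ => gn (m + 1) := by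
      funext m; rw [hnat2]
    have e3 : gn (0:ℤ).natAbs = 0 := by
      show gn 0 = 0
      rw [hgn]; dsimp only; rw [if_pos (by omega)]
    rw [e1, e2, e3]
    ring
  -- compute the ℕ-tail
  have h5 : ∑' m : ℕ, gn (m + 1) = ∑' j : ℕ, gn (j + n + 1) := by
    have := Summable.sum_add_tsum_nat_add (f := fun m : ℕ => gn (m + 1)) n hsn1
    have hz : ∑ i ∈ Finset.range n, gn (i + 1) = 0 := by
      apply Finset.sum_eq_zero
      intro i hi
      rw [hgn]; dsimp only
      rw [if_pos (by have := Finset.mem_range.mp hi; omega)]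
    rw [← this, hz, zero_add]
  have h6 : ∑' j : ℕ, gn (j + n + 1)
      = C * ∑' j : ℕ, (((j:ℝ) + 1) * ((n:ℝ) + j + 1) ^ (-d)) := by
    rw [← tsum_mul_left]
    apply tsum_congr
    intro j
    rw [hgn]; dsimp only
    rw [if_neg (by omega)]
    have e1 : ((j + n + 1 : ℕ) : ℝ) = (n:ℝ) + j + 1 := by push_cast; ring
    rw [e1]
    ring
  have h7 := key_tail d hd (n:ℝ) (by exact_mod_cast hn)
  calc ‖∑' (x : ↑((Finset.Icc (-(n:ℤ)) (n:ℤ) : Finset ℤ) : Set ℤ)ᶜ), w ↑x‖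
      ≤ ∑' k : ℤ, gn k.natAbs := le_trans h1 (le_trans h2 h3)
    _ = 2 * (C * ∑' j : ℕ, (((j:ℝ) + 1) * ((n:ℝ) + j + 1) ^ (-d))) := by rw [h4, h5, h6]
    _ ≤ 2 * C * (1 / ((d - 1) * (d - 2)) + 1 / n) * (n : ℝ) ^ (-(d - 2)) := by
        have := mul_le_mul_of_nonneg_left h7 hC.le
        nlinarith [this]
end

section
/- Let a > 0 and let D : ℕ → ℝ satisfy D(n) = a·n + e(n) where e(n)/n → 0 as n → ∞. For each n ≥ 2 let ξ = (1, 2, …, n) and Δ = (D(1), …, D(n)), with empirical covariance cov(x, y) = (1/n)∑_{j=1}^n (x(j) − x̄)(y(j) − ȳ), variance var(x) = cov(x, x), and correlation corr(ξ, Δ) = cov(ξ, Δ)/√(var(ξ)·var(Δ)). Then var(Δ) > 0 for all sufficiently large n, and corr(ξ, Δ) → 1 as n → ∞. (Thus if D_c(n) = a n + o(n) with a > 0, the correlation-method value of K_c equals 1.) -/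
open Filter Topology

/-- Empirical covariance of two vectors of length `n`:
`cov(x,y) = (1/n) ∑_j (x j - x̄)(y j - ȳ)`. -/
noncomputable def ecov (n : ℕ) (x y : Fin n → ℝ) : ℝ :=
  (1 / (n : ℝ)) * ∑ j, (x j - (1 / (n : ℝ)) * ∑ i, x i) * (y j - (1 / (n : ℝ)) * ∑ i, y i)

section aux

lemma ecov_comm (n : ℕ) (x y : Fin n → ℝ) : ecov n x y = ecov n y x := by
  unfold ecov
  congr 1
  exact Finset.sum_congr rfl fun j _ => mul_comm _ _

private lemma key_sum {ι : Type*} (s : Finset ι) (f g h : ι → ℝ) (b cx cy cz : ℝ) :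
    ∑ j ∈ s, (f j - cx) * ((b * g j + h j) - (b * cy + cz)) =
      b * ∑ j ∈ s, (f j - cx) * (g j - cy) + ∑ j ∈ s, (f j - cx) * (h j - cz) := by
  rw [Finset.mul_sum, ← Finset.sum_add_distrib]
  exact Finset.sum_congr rfl fun j _ => by ring

lemma ecov_smul_add (n : ℕ) (b : ℝ) (x y z : Fin n → ℝ) :
    ecov n x (fun j => b * y j + z j) = b * ecov n x y + ecov n x z := by
  unfold ecov
  have hS : (1/(n:ℝ)) * ∑ i, (b * y i + z i)
      = b * ((1/(n:ℝ)) * ∑ i, y i) + (1/(n:ℝ)) * ∑ i, z i := by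
    rw [Finset.sum_add_distrib, ← Finset.mul_sum]; ring
  simp only []
  rw [hS, key_sum]; ring

lemma ecov_nonneg (n : ℕ) (x : Fin n → ℝ) : 0 ≤ ecov n x x := by
  unfold ecov
  apply mul_nonneg (by positivity)
  exact Finset.sum_nonneg fun j _ => mul_self_nonneg _

lemma ecov_sq_le (n : ℕ) (x y : Fin n → ℝ) :
    (ecov n x y) ^ 2 ≤ ecov n x x * ecov n y y := by
  unfold ecov
  simp only [show ∀ t : ℝ, t * t = t ^ 2 from fun t => (sq t).symm]
  have H := Finset.sum_mul_sq_le_sq_mul_sq Finset.univ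
    (fun j => x j - (1/(n:ℝ)) * ∑ i, x i) (fun j => y j - (1/(n:ℝ)) * ∑ i, y i)
  have hn : (0:ℝ) ≤ 1/(n:ℝ) * (1/(n:ℝ)) := by positivity
  calc (1/(n:ℝ) * ∑ j, (x j - (1/(n:ℝ)) * ∑ i, x i) * (y j - (1/(n:ℝ)) * ∑ i, y i))^2
      = 1/(n:ℝ) * (1/(n:ℝ)) * (∑ j, (x j - (1/(n:ℝ)) * ∑ i, x i) * (y j - (1/(n:ℝ)) * ∑ i, y i))^2 := by
        ring
    _ ≤ 1/(n:ℝ) * (1/(n:ℝ)) * ((∑ j, (x j - (1/(n:ℝ)) * ∑ i, x i)^2) * ∑ j, (y j - (1/(n:ℝ)) * ∑ i, y i)^2) :=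
        mul_le_mul_of_nonneg_left H hn
    _ = _ := by ring

private lemma s1 (n : ℕ) : ∑ i ∈ Finset.range n, ((i:ℝ)+1) = (n:ℝ)*((n:ℝ)+1)/2 := by
  induction n with
  | zero => simp
  | succ m ih => rw [Finset.sum_range_succ, ih]; push_cast; ring

private lemma s2 (n : ℕ) :
    ∑ i ∈ Finset.range n, ((i:ℝ)+1)^2 = (n:ℝ)*((n:ℝ)+1)*(2*(n:ℝ)+1)/6 := by
  induction n with
  | zero => simp
  | succ m ih => rw [Finset.sum_range_succ, ih]; push_cast; ring

lemma sum_xi (n : ℕ) : ∑ j : Fin n, (((j:ℕ):ℝ) + 1) = (n:ℝ)*((n:ℝ)+1)/2 := by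
  rw [← s1]; exact Fin.sum_univ_eq_sum_range (fun i => ((i:ℝ)+1)) n

lemma sum_xi_sq (n : ℕ) :
    ∑ j : Fin n, (((j:ℕ):ℝ) + 1)^2 = (n:ℝ)*((n:ℝ)+1)*(2*(n:ℝ)+1)/6 := by
  rw [← s2]; exact Fin.sum_univ_eq_sum_range (fun i => ((i:ℝ)+1)^2) n

lemma ecov_eq (n : ℕ) (x y : Fin n → ℝ) :
    ecov n x y = (1/(n:ℝ)) * ∑ j, x j * y j
      - ((1/(n:ℝ)) * ∑ i, x i) * ((1/(n:ℝ)) * ∑ i, y i) := by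
  rcases Nat.eq_zero_or_pos n with h | h
  · subst h; simp [ecov]
  · have hn : (n:ℝ) ≠ 0 := Nat.cast_ne_zero.2 h.ne'
    unfold ecov
    rw [Finset.sum_congr rfl (fun (j : Fin n) _ =>
      (by ring : (x j - (1/(n:ℝ)) * ∑ i, x i) * (y j - (1/(n:ℝ)) * ∑ i, y i)
        = x j * y j - ((1/(n:ℝ)) * ∑ i, y i) * x j - ((1/(n:ℝ)) * ∑ i, x i) * y j
          + ((1/(n:ℝ)) * ∑ i, x i) * ((1/(n:ℝ)) * ∑ i, y i)))]
    rw [Finset.sum_add_distrib, Finset.sum_sub_distrib, Finset.sum_sub_distrib,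
      ← Finset.mul_sum, ← Finset.mul_sum, Finset.sum_const, Finset.card_univ, Fintype.card_fin,
      nsmul_eq_mul]
    field_simp
    ring

/-- The vector `ξ = (1,…,n)`. -/
def xiv (n : ℕ) : Fin n → ℝ := fun j => ((j:ℕ):ℝ) + 1

/-- The vector of errors `e(j) = D(j) - a·j`, `j = 1,…,n`. -/
def errv (a : ℝ) (D : ℕ → ℝ) (n : ℕ) : Fin n → ℝ :=
  fun j => D ((j:ℕ)+1) - a * (((j:ℕ):ℝ)+1)

/-- The vector `Δ = (D(1),…,D(n))`. -/
def dv (D : ℕ → ℝ) (n : ℕ) : Fin n → ℝ := fun j => D ((j:ℕ)+1)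

lemma var_xi (n : ℕ) (hn : n ≠ 0) :
    ecov n (xiv n) (xiv n) = ((n:ℝ)^2 - 1)/12 := by
  have hn' : (n:ℝ) ≠ 0 := Nat.cast_ne_zero.2 hn
  rw [ecov_eq]
  unfold xiv
  rw [Finset.sum_congr rfl (fun (j : Fin n) _ =>
    (sq (((j:ℕ):ℝ) + 1)).symm), sum_xi_sq, sum_xi]
  field_simp
  ring

lemma ecov_le_meansq (n : ℕ) (x : Fin n → ℝ) :
    ecov n x x ≤ (1/(n:ℝ)) * ∑ j, (x j)^2 := by
  rw [ecov_eq]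
  have h1 : ∑ j, x j * x j = ∑ j, (x j)^2 := Finset.sum_congr rfl fun j _ => (sq _).symm
  rw [h1]
  exact sub_le_self _ (mul_self_nonneg _)

lemma dv_decomp (a : ℝ) (D : ℕ → ℝ) (n : ℕ) :
    dv D n = fun j => a * xiv n j + errv a D n j := by
  funext j; simp only [dv, xiv, errv]; ring

lemma cov_xi_dv (a : ℝ) (D : ℕ → ℝ) (n : ℕ) :
    ecov n (xiv n) (dv D n)
      = a * ecov n (xiv n) (xiv n) + ecov n (xiv n) (errv a D n) := by
  rw [dv_decomp a D n]
  exact ecov_smul_add n a (xiv n) (xiv n) (errv a D n)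

lemma var_dv (a : ℝ) (D : ℕ → ℝ) (n : ℕ) :
    ecov n (dv D n) (dv D n)
      = a^2 * ecov n (xiv n) (xiv n) + 2*a * ecov n (xiv n) (errv a D n)
        + ecov n (errv a D n) (errv a D n) := by
  conv_lhs => rw [dv_decomp a D n]
  rw [ecov_smul_add n a _ (xiv n) (errv a D n)]
  rw [ecov_comm n _ (xiv n), ecov_comm n _ (errv a D n)]
  rw [ecov_smul_add n a (xiv n) (xiv n) (errv a D n),
    ecov_smul_add n a (errv a D n) (xiv n) (errv a D n)]
  rw [ecov_comm n (errv a D n) (xiv n)]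
  ring

end aux

/-- if `D(n) = a·n + e(n)` with `a > 0` and `e(n) = o(n)`, then the empirical
variance of `Δ = (D(1),…,D(n))` is eventually positive, and the empirical correlation of
`ξ = (1,…,n)` with `Δ` tends to `1`: the correlation-method value of `K_c` is `1`. -/
theorem stmt16 (a : ℝ) (ha : 0 < a) (D : ℕ → ℝ)
    (he : Tendsto (fun n : ℕ => (D n - a * n) / n) atTop (𝓝 0)) :
    (∀ᶠ n : ℕ in atTop, 0 < ecov n (fun j => D ((j : ℕ) + 1)) (fun j => D ((j : ℕ) + 1))) ∧
    Tendsto (fun n : ℕ =>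
      ecov n (fun j => ((j : ℕ) : ℝ) + 1) (fun j => D ((j : ℕ) + 1)) /
        Real.sqrt (ecov n (fun j => ((j : ℕ) : ℝ) + 1) (fun j => ((j : ℕ) : ℝ) + 1) *
          ecov n (fun j => D ((j : ℕ) + 1)) (fun j => D ((j : ℕ) + 1))))
      atTop (𝓝 1) := by
  -- abbreviations
  set g : ℕ → ℝ := fun n => (D n - a * n) / n with hg_def
  set U : ℕ → ℝ := fun n => ecov n (xiv n) (xiv n) with hUdef
  set W : ℕ → ℝ := fun n => ecov n (xiv n) (errv a D n) with hWdef
  set S : ℕ → ℝ := fun n => ecov n (errv a D n) (errv a D n) with hSdef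
  have hSnonneg : ∀ n, 0 ≤ S n := fun n => ecov_nonneg n _
  -- limit of S n / n^2
  have hg1 : Tendsto (fun k : ℕ => (g (k+1))^2) atTop (𝓝 0) := by
    have h0 : Tendsto (fun k : ℕ => g (k+1)) atTop (𝓝 0) := he.comp (tendsto_add_atTop_nat 1)
    simpa using h0.pow 2
  have hC : Tendsto (fun n : ℕ => ((n:ℝ))⁻¹ * ∑ i ∈ Finset.range n, (g (i+1))^2)
      atTop (𝓝 0) := hg1.cesaro
  have hS2 : Tendsto (fun n : ℕ => S n / (n:ℝ)^2) atTop (𝓝 0) := by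
    apply tendsto_of_tendsto_of_tendsto_of_le_of_le' tendsto_const_nhds hC
    · filter_upwards with n
      exact div_nonneg (hSnonneg n) (sq_nonneg _)
    · filter_upwards [Filter.eventually_ge_atTop 1] with n hn
      have hn0 : (0:ℝ) < (n:ℝ) := by exact_mod_cast hn
      have hbound : ∀ j : Fin n, (errv a D n j)^2 ≤ (g ((j:ℕ)+1))^2 * (n:ℝ)^2 := by
        intro j
        have hj0 : (((j:ℕ):ℝ)+1) ≠ 0 := by positivity
        have hje : errv a D n j = g ((j:ℕ)+1) * (((j:ℕ):ℝ)+1) := by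
          simp only [errv, hg_def]
          push_cast
          field_simp
        have hjle : (((j:ℕ):ℝ)+1) ≤ (n:ℝ) := by
          have := j.isLt
          exact_mod_cast Nat.succ_le_of_lt this
        rw [hje, mul_pow]
        apply mul_le_mul_of_nonneg_left _ (sq_nonneg _)
        have h1 : (0:ℝ) ≤ ((j:ℕ):ℝ)+1 := by positivity
        exact pow_le_pow_left₀ h1 hjle 2
      calc S n / (n:ℝ)^2
          ≤ ((1/(n:ℝ)) * ∑ j, (errv a D n j)^2) / (n:ℝ)^2 := by
            gcongr
            exact ecov_le_meansq n _
        _ ≤ ((1/(n:ℝ)) * ∑ j : Fin n, (g ((j:ℕ)+1))^2 * (n:ℝ)^2) / (n:ℝ)^2 := by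
            gcongr
            exact hbound _
        _ = ((n:ℝ))⁻¹ * ∑ i ∈ Finset.range n, (g (i+1))^2 := by
            rw [Fin.sum_univ_eq_sum_range (fun i => (g (i+1))^2 * (n:ℝ)^2) n]
            rw [← Finset.sum_mul]
            field_simp
  -- limit of U n / n^2
  have hU2 : Tendsto (fun n : ℕ => U n / (n:ℝ)^2) atTop (𝓝 (1/12)) := by
    have hinv : Tendsto (fun n : ℕ => ((n:ℝ))⁻¹ * ((n:ℝ))⁻¹) atTop (𝓝 0) := by
      simpa using (tendsto_inv_atTop_nhds_zero_nat : Tendsto (fun n : ℕ => ((n:ℝ))⁻¹) atTop (𝓝 0)).mul (tendsto_inv_atTop_nhds_zero_nat : Tendsto (fun n : ℕ => ((n:ℝ))⁻¹) atTop (𝓝 0))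
    have hmain : Tendsto (fun n : ℕ => 1/12 - (1/12) * (((n:ℝ))⁻¹ * ((n:ℝ))⁻¹))
        atTop (𝓝 (1/12)) := by
      have := (hinv.const_mul (1/12 : ℝ)).const_sub (1/12 : ℝ)
      simpa using this
    apply hmain.congr'
    filter_upwards [Filter.eventually_ge_atTop 1] with n hn
    have hn0 : (n:ℝ) ≠ 0 := by
      have : (0:ℝ) < (n:ℝ) := by exact_mod_cast hn
      exact this.ne'
    rw [hUdef]
    simp only []
    rw [var_xi n (by omega)]
    field_simp
  -- limit of W n / n^2
  have hW2 : Tendsto (fun n : ℕ => W n / (n:ℝ)^2) atTop (𝓝 0) := by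
    have hsq : Tendsto (fun n : ℕ => (W n / (n:ℝ)^2)^2) atTop (𝓝 0) := by
      have hup := hS2.const_mul (1/12 : ℝ)
      rw [mul_zero] at hup
      apply tendsto_of_tendsto_of_tendsto_of_le_of_le' tendsto_const_nhds hup
      · filter_upwards with n; positivity
      · filter_upwards [Filter.eventually_ge_atTop 1] with n hn
        have hn0 : (0:ℝ) < (n:ℝ) := by exact_mod_cast hn
        have h1 : (W n)^2 ≤ U n * S n := ecov_sq_le n _ _
        have h2 : U n ≤ (n:ℝ)^2/12 := by
          rw [hUdef]; simp only []
          rw [var_xi n (by omega)]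
          nlinarith [hn0]
        have h3 : U n * S n ≤ ((n:ℝ)^2/12) * S n :=
          mul_le_mul_of_nonneg_right h2 (hSnonneg n)
        have hne : ((n:ℝ)^2)^2 ≠ 0 := by positivity
        calc (W n / (n:ℝ)^2)^2 = (W n)^2 / ((n:ℝ)^2)^2 := by rw [div_pow]
          _ ≤ (((n:ℝ)^2/12) * S n) / ((n:ℝ)^2)^2 := by
              gcongr
              exact h1.trans h3
          _ = 1/12 * (S n / (n:ℝ)^2) := by field_simp
    have habs : Tendsto (fun n : ℕ => |W n / (n:ℝ)^2|) atTop (𝓝 0) := by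
      have := (Real.continuous_sqrt.tendsto 0).comp hsq
      simpa [Function.comp_def, Real.sqrt_sq_eq_abs] using this
    exact (tendsto_zero_iff_abs_tendsto_zero _).2 habs
  -- variance of Δ over n²
  have hV2 : Tendsto (fun n : ℕ => ecov n (dv D n) (dv D n) / (n:ℝ)^2)
      atTop (𝓝 (a^2/12)) := by
    have hcomb : Tendsto (fun n : ℕ =>
        a^2 * (U n / (n:ℝ)^2) + 2*a * (W n / (n:ℝ)^2) + S n / (n:ℝ)^2)
        atTop (𝓝 (a^2 * (1/12) + 2*a * 0 + 0)) :=
      ((hU2.const_mul (a^2)).add (hW2.const_mul (2*a))).add hS2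
    have : a^2 * (1/12) + 2*a*0 + 0 = a^2/12 := by ring
    rw [this] at hcomb
    apply hcomb.congr
    intro n
    rw [var_dv a D n]
    rw [hUdef, hWdef, hSdef]
    simp only []
    ring
  constructor
  · -- eventual positivity
    have hpos : (0:ℝ) < a^2/12 := by positivity
    have hev := hV2.eventually (eventually_gt_nhds hpos)
    filter_upwards [hev, Filter.eventually_ge_atTop 1] with n h1 h2
    have hn0 : (0:ℝ) < (n:ℝ)^2 := by
      have : (0:ℝ) < (n:ℝ) := by exact_mod_cast h2
      positivity
    have := mul_pos h1 hn0
    rw [div_mul_cancel₀ _ hn0.ne'] at this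
    exact this
  · -- the correlation limit
    have hnum : Tendsto (fun n : ℕ => ecov n (xiv n) (dv D n) / (n:ℝ)^2)
        atTop (𝓝 (a/12)) := by
      have hcomb : Tendsto (fun n : ℕ => a * (U n / (n:ℝ)^2) + W n / (n:ℝ)^2)
          atTop (𝓝 (a * (1/12) + 0)) := (hU2.const_mul a).add hW2
      have : a * (1/12) + 0 = a/12 := by ring
      rw [this] at hcomb
      apply hcomb.congr
      intro n
      rw [cov_xi_dv a D n, hUdef, hWdef]
      simp only []
      ring
    have hden : Tendsto (fun n : ℕ =>
        Real.sqrt ((U n / (n:ℝ)^2) * (ecov n (dv D n) (dv D n) / (n:ℝ)^2)))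
        atTop (𝓝 (a/12)) := by
      have h0 : Tendsto (fun n : ℕ => (U n / (n:ℝ)^2) * (ecov n (dv D n) (dv D n) / (n:ℝ)^2))
          atTop (𝓝 ((1/12) * (a^2/12))) := hU2.mul hV2
      have := (Real.continuous_sqrt.tendsto _).comp h0
      have hs : Real.sqrt ((1/12) * (a^2/12)) = a/12 := by
        rw [show (1/12 : ℝ) * (a^2/12) = (a/12)^2 by ring]
        exact Real.sqrt_sq (by positivity)
      rw [hs] at this
      simpa [Function.comp_def] using this
    have hlim := hnum.div hden (by positivity : (a/12 : ℝ) ≠ 0)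
    rw [div_self (by positivity : (a/12 : ℝ) ≠ 0)] at hlim
    apply hlim.congr'
    filter_upwards [Filter.eventually_ge_atTop 1] with n hn
    have hn0 : (0:ℝ) < (n:ℝ) := by exact_mod_cast hn
    have hn2 : (0:ℝ) < (n:ℝ)^2 := by positivity
    have hprod : U n * ecov n (dv D n) (dv D n)
        = ((n:ℝ)^2)^2 * ((U n / (n:ℝ)^2) * (ecov n (dv D n) (dv D n) / (n:ℝ)^2)) := by
      field_simp
    have hsqrt : Real.sqrt (U n * ecov n (dv D n) (dv D n))
        = (n:ℝ)^2 * Real.sqrt ((U n / (n:ℝ)^2) * (ecov n (dv D n) (dv D n) / (n:ℝ)^2)) := by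
      rw [hprod, show ((n:ℝ)^2)^2 = ((n:ℝ)^2)^2 from rfl, Real.sqrt_mul (by positivity),
        Real.sqrt_sq hn2.le]
    show ecov n (xiv n) (dv D n) / (n:ℝ)^2 /
        Real.sqrt ((U n / (n:ℝ)^2) * (ecov n (dv D n) (dv D n) / (n:ℝ)^2))
      = ecov n (xiv n) (dv D n) / Real.sqrt (U n * ecov n (dv D n) (dv D n))
    rw [hsqrt, div_div]
end
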